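/- Let ε > 0 be fixed. There is a constant C(ε) such that for all real F₁, F₂ ≥ 1/2 and every positive integer q, one has Σ_{F₁ < f₁ ≤ 2F₁, F₂ < f₂ ≤ 2F₂, gcd(f₁,f₂) = 1, gcd(f₁f₂,q) = 1} M(q, f₁², f₂²) ≤ C(ε) · q^ε · (F₁F₂ + q), where f₁, f₂ range over positive integers. -/

import Mathlib

open Finset

/-- `Mweight q a₁ a₂ = ∑_{d ∣ q} d ∑_{0 < |r|,|s| ≤ q/2, a₁s + a₂r ≡ 0 (mod d)}
|r|⁻¹ |s|⁻¹`. -/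
noncomputable def Mweight (q : ℕ) (a₁ a₂ : ℤ) : ℝ :=
  ∑ d ∈ q.divisors, (d : ℝ) *
    ∑ r ∈ Finset.Icc (-(q : ℤ)) (q : ℤ), ∑ s ∈ Finset.Icc (-(q : ℤ)) (q : ℤ),
      if r ≠ 0 ∧ s ≠ 0 ∧ 2 * |r| ≤ (q : ℤ) ∧ 2 * |s| ≤ (q : ℤ) ∧
          (d : ℤ) ∣ (a₁ * s + a₂ * r) then
        (|(r : ℝ)| * |(s : ℝ)|)⁻¹ else 0


noncomputable def Hsum (n : ℕ) : ℝ := ∑ j ∈ Finset.Icc 1 n, ((j:ℝ))⁻¹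

lemma Hsum_nonneg (n : ℕ) : 0 ≤ Hsum n := by
  apply Finset.sum_nonneg; intro i _; positivity

lemma Hsum_mono {m n : ℕ} (h : m ≤ n) : Hsum m ≤ Hsum n := by
  apply Finset.sum_le_sum_of_subset_of_nonneg
  · exact Finset.Icc_subset_Icc_right h
  · intro i _ _; positivity

lemma one_le_Hsum {n : ℕ} (h : 1 ≤ n) : 1 ≤ Hsum n := by
  have : Hsum 1 ≤ Hsum n := Hsum_mono h
  simpa [Hsum] using this

lemma Hsum_le_one_add_log (n : ℕ) : Hsum n ≤ 1 + Real.log n := by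
  induction n with
  | zero => simp [Hsum, Real.log_zero]
  | succ m ih =>
    rcases Nat.eq_zero_or_pos m with hm | hm
    · subst hm; simp [Hsum]
    have hstep : ((m:ℝ)+1)⁻¹ ≤ Real.log (m+1) - Real.log m := by
      have hm' : (0:ℝ) < m := by exact_mod_cast hm
      have h1 : Real.log ((m:ℝ)/(m+1)) ≤ (m:ℝ)/(m+1) - 1 :=
        Real.log_le_sub_one_of_pos (by positivity)
      have h2 : Real.log ((m:ℝ)/(m+1)) = Real.log m - Real.log (m+1) := by
        rw [Real.log_div (by positivity) (by positivity)]
      have h3 : (m:ℝ)/(m+1) - 1 = -(((m:ℝ)+1)⁻¹) := by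
        field_simp
        ring
      rw [h2, h3] at h1; linarith
    have hsum : Hsum (m+1) = Hsum m + ((m:ℝ)+1)⁻¹ := by
      unfold Hsum
      rw [Finset.sum_Icc_succ_top (by omega : 1 ≤ m+1)]
      push_cast; ring
    have : (((m:ℕ):ℝ)+1) = ((m+1 : ℕ):ℝ) := by push_cast; ring
    rw [hsum]
    push_cast
    linarith [hstep]

lemma Hsum_le_rpow {δ : ℝ} (hδ : 0 < δ) {n : ℕ} (hn : 1 ≤ n) :
    Hsum n ≤ (1 + 1/δ) * (n:ℝ) ^ δ := by
  have h1 : (1:ℝ) ≤ (n:ℝ) ^ δ := by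
    apply Real.one_le_rpow (by exact_mod_cast hn) hδ.le
  have h2 : Real.log n ≤ (n:ℝ) ^ δ / δ := Real.log_le_rpow_div (by positivity) hδ
  have := Hsum_le_one_add_log n
  calc Hsum n ≤ 1 + Real.log n := this
    _ ≤ (n:ℝ)^δ + (n:ℝ)^δ/δ := by linarith
    _ = (1 + 1/δ) * (n:ℝ)^δ := by field_simp



lemma oneSideSum (B g : ℕ) (hg : 0 < g) (T : Finset ℤ)
    (hT : T ⊆ Finset.Ioc 0 (B:ℤ))
    (hpair : ∀ s ∈ T, ∀ s' ∈ T, (g:ℤ) ∣ s - s')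
    (hlow : ∀ s ∈ T, (g:ℤ) ≤ s) :
    ∑ s ∈ T, ((s:ℝ))⁻¹ ≤ Hsum B / g := by
  have hg' : (0:ℤ) < g := by exact_mod_cast hg
  set j : ℤ → ℕ := fun s => (s / g).toNat with hj
  have hjge : ∀ s ∈ T, 1 ≤ s / (g:ℤ) := by
    intro s hs
    rw [Int.le_ediv_iff_mul_le hg']
    simpa using hlow s hs
  have hjle : ∀ s ∈ T, s / (g:ℤ) ≤ B := by
    intro s hs
    have hmem := (hT hs); simp only [Finset.mem_Ioc] at hmem
    have h1 : s / (g:ℤ) ≤ s := Int.ediv_le_self (g:ℤ) (by linarith [hmem.1])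
    linarith [hmem.2]
  have hmul : ∀ s ∈ T, (g:ℤ) * (s / (g:ℤ)) ≤ s := by
    intro s hs
    have := Int.ediv_mul_le s (ne_of_gt hg')
    linarith [this]
  have hinj : Set.InjOn j T := by
    intro s hs s' hs' heq
    have hd := hpair s hs s' hs'
    obtain ⟨k, hk⟩ := hd
    have h1 : s = s' + (g:ℤ) * k := by linarith [hk]
    have h2 : s / (g:ℤ) = s' / (g:ℤ) + k := by
      rw [h1, mul_comm, Int.add_mul_ediv_right _ _ (ne_of_gt hg')]
    have e1 := hjge s hs
    have e2 := hjge s' hs'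
    have htn : (s / (g:ℤ)).toNat = (s' / (g:ℤ)).toNat := heq
    have h3 : s / (g:ℤ) = s' / (g:ℤ) := by omega
    have hk0 : k = 0 := by omega
    rw [hk0, mul_zero, add_zero] at h1
    exact h1
  calc ∑ s ∈ T, ((s:ℝ))⁻¹
      ≤ ∑ s ∈ T, ((g:ℝ) * (j s : ℝ))⁻¹ := by
        apply Finset.sum_le_sum
        intro s hs
        have e1 := hjge s hs
        have hjs : ((j s : ℤ)) = s / (g:ℤ) := Int.toNat_of_nonneg (by linarith)
        have key : (g:ℝ) * (j s : ℝ) ≤ (s:ℝ) := by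
          have := hmul s hs
          have : (g:ℤ) * (j s : ℤ) ≤ s := by rw [hjs]; exact this
          exact_mod_cast this
        have hpos : (0:ℝ) < (g:ℝ) * (j s : ℝ) := by
          have : (1:ℤ) ≤ (j s : ℤ) := by rw [hjs]; exact e1
          have : (1:ℝ) ≤ (j s : ℝ) := by exact_mod_cast this
          have hgr : (0:ℝ) < g := by exact_mod_cast hg
          nlinarith
        exact inv_anti₀ hpos key
    _ = ∑ k ∈ T.image j, ((g:ℝ) * (k:ℝ))⁻¹ := by
        rw [Finset.sum_image (fun x hx y hy h => hinj hx hy h)]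
    _ ≤ ∑ k ∈ Finset.Icc 1 B, ((g:ℝ) * (k:ℝ))⁻¹ := by
        apply Finset.sum_le_sum_of_subset_of_nonneg
        · intro k hk
          obtain ⟨s, hs, rfl⟩ := Finset.mem_image.mp hk
          have e1 := hjge s hs
          have e2 := hjle s hs
          have hnn : 0 ≤ s / (g:ℤ) := by linarith
          have hts : ((j s : ℕ):ℤ) = s / (g:ℤ) := Int.toNat_of_nonneg hnn
          simp only [Finset.mem_Icc]
          omega
        · intro i _ _; positivity
    _ = Hsum B / g := by
        unfold Hsum
        rw [eq_div_iff (by positivity : ((g:ℝ)) ≠ 0)]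
        rw [Finset.sum_mul]
        apply Finset.sum_congr rfl
        intro k hk
        have hk0 : (k:ℝ) ≠ 0 := by
          simp only [Finset.mem_Icc] at hk
          have : (1:ℝ) ≤ (k:ℝ) := by exact_mod_cast hk.1
          linarith
        have hgr : (g:ℝ) ≠ 0 := by positivity
        rw [mul_inv]
        field_simp

lemma twoSideSum (B g : ℕ) (hg : 0 < g) (T : Finset ℤ)
    (hT : T ⊆ Finset.Icc (-(B:ℤ)) B)
    (h0 : ∀ s ∈ T, s ≠ 0)
    (hpair : ∀ s ∈ T, ∀ s' ∈ T, (g:ℤ) ∣ s - s')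
    (hlow : ∀ s ∈ T, (g:ℤ) ≤ |s|) :
    ∑ s ∈ T, |((s:ℝ))|⁻¹ ≤ 2 * Hsum B / g := by
  have hsplit := Finset.sum_filter_add_sum_filter_not T (fun s => 0 < s) (fun s => |((s:ℝ))|⁻¹)
  rw [← hsplit]
  have hpos : ∑ s ∈ T.filter (fun s => 0 < s), |((s:ℝ))|⁻¹ ≤ Hsum B / g := by
    have : ∑ s ∈ T.filter (fun s => 0 < s), |((s:ℝ))|⁻¹
        = ∑ s ∈ T.filter (fun s => 0 < s), ((s:ℝ))⁻¹ := by
      apply Finset.sum_congr rfl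
      intro s hs
      simp only [Finset.mem_filter] at hs
      rw [abs_of_pos (by exact_mod_cast hs.2)]
    rw [this]
    apply oneSideSum B g hg
    · intro s hs
      simp only [Finset.mem_filter] at hs
      have := hT hs.1
      simp only [Finset.mem_Icc] at this
      simp only [Finset.mem_Ioc]
      exact ⟨hs.2, this.2⟩
    · intro s hs s' hs'
      simp only [Finset.mem_filter] at hs hs'
      exact hpair s hs.1 s' hs'.1
    · intro s hs
      simp only [Finset.mem_filter] at hs
      have := hlow s hs.1
      rwa [abs_of_pos hs.2] at this
  have hneg : ∑ s ∈ T.filter (fun s => ¬ 0 < s), |((s:ℝ))|⁻¹ ≤ Hsum B / g := by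
    have himg : ∑ s ∈ T.filter (fun s => ¬ 0 < s), |((s:ℝ))|⁻¹
        = ∑ t ∈ (T.filter (fun s => ¬ 0 < s)).image (fun s => -s), ((t:ℝ))⁻¹ := by
      rw [Finset.sum_image (by intro x _ y _ h; exact neg_injective h)]
      apply Finset.sum_congr rfl
      intro s hs
      simp only [Finset.mem_filter] at hs
      have hs0 := h0 s hs.1
      have hneg : s < 0 := by omega
      have : |((s:ℝ))| = ((-s : ℤ):ℝ) := by
        push_cast
        rw [abs_of_neg (by exact_mod_cast hneg)]
      rw [this]
    rw [himg]
    apply oneSideSum B g hg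
    · intro t ht
      obtain ⟨s, hs, rfl⟩ := Finset.mem_image.mp ht
      simp only [Finset.mem_filter] at hs
      have := hT hs.1
      simp only [Finset.mem_Icc] at this
      have hs0 := h0 s hs.1
      simp only [Finset.mem_Ioc]
      omega
    · intro t ht t' ht'
      obtain ⟨s, hs, rfl⟩ := Finset.mem_image.mp ht
      obtain ⟨s', hs', rfl⟩ := Finset.mem_image.mp ht'
      simp only [Finset.mem_filter] at hs hs'
      have := hpair s' hs'.1 s hs.1
      have h2 : -s - -s' = s' - s := by ring
      rw [h2]
      exact this
    · intro t ht
      obtain ⟨s, hs, rfl⟩ := Finset.mem_image.mp ht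
      simp only [Finset.mem_filter] at hs
      have := hlow s hs.1
      have hs0 := h0 s hs.1
      have hneg : s < 0 := by omega
      rwa [abs_of_neg hneg] at this
  have h2 : 2 * Hsum B / g = Hsum B / g + Hsum B / g := by ring
  linarith

lemma mcount (W m : ℕ) (hm : 0 < m) :
    ((Finset.Icc (-(W:ℤ)) W).filter (fun u => (m:ℤ) ∣ u)).card ≤ 2*(W/m) + 1 := by
  have hm' : (0:ℤ) < m := by exact_mod_cast hm
  have hcard : (Finset.Icc (-((W/m : ℕ):ℤ)) ((W/m : ℕ):ℤ)).card = 2*(W/m)+1 := by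
    rw [Int.card_Icc]
    omega
  rw [← hcard]
  apply Finset.card_le_card_of_injOn (fun u => u / (m:ℤ))
  · intro u hu
    simp only [Finset.mem_coe, Finset.mem_filter, Finset.mem_Icc] at hu ⊢
    obtain ⟨⟨h1, h2⟩, k, hk⟩ := hu
    have hdm := Nat.div_add_mod W m
    have hmod := Nat.mod_lt W hm
    constructor
    · -- -(W/m) ≤ u / m
      subst hk
      rw [Int.mul_ediv_cancel_left _ (ne_of_gt hm')]
      by_contra hcon
      push_neg at hcon
      have hk2 : k ≤ -((W/m : ℕ):ℤ) - 1 := by omega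
      have : (m:ℤ) * k ≤ (m:ℤ) * (-((W/m : ℕ):ℤ) - 1) :=
        mul_le_mul_of_nonneg_left hk2 (by positivity)
      have hWm : (m:ℤ) * ((W/m : ℕ):ℤ) + ((W % m : ℕ):ℤ) = (W:ℤ) := by exact_mod_cast hdm
      have hmod' : ((W % m : ℕ):ℤ) < (m:ℤ) := by exact_mod_cast hmod
      nlinarith
    · -- u / m ≤ W/m
      have : u / (m:ℤ) ≤ (W:ℤ) / (m:ℤ) := Int.ediv_le_ediv hm' h2
      rwa [← Int.natCast_div] at this
  · intro u hu u' hu' heq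
    simp only [Finset.coe_filter, Set.mem_setOf_eq] at hu hu'
    have h1 : u / (m:ℤ) * m = u := Int.ediv_mul_cancel hu.2
    have h2 : u' / (m:ℤ) * m = u' := Int.ediv_mul_cancel hu'.2
    simp only at heq
    rw [← h1, ← h2, heq]


lemma tau_le_rpow {δ : ℝ} (hδ : 0 < δ) :
    ∃ C : ℝ, 1 ≤ C ∧ ∀ n : ℕ, 1 ≤ n → (n.divisors.card : ℝ) ≤ C * (n:ℝ)^δ := by
  set t : ℝ := 2^δ - 1 with ht
  have ht0 : 0 < t := by
    have : (1:ℝ) = (2:ℝ)^(0:ℝ) := by simp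
    have h2 : (2:ℝ)^(0:ℝ) < (2:ℝ)^δ := Real.rpow_lt_rpow_left_iff (by norm_num) |>.mpr hδ
    simp only [Real.rpow_zero] at h2
    simp [ht]; linarith
  set μ : ℝ := min 1 t with hμ
  have hμ0 : 0 < μ := lt_min one_pos ht0
  set K : ℝ := 1/μ with hK
  have hK1 : 1 ≤ K := by
    rw [hK]
    rw [le_div_iff₀ hμ0]
    simp [hμ]
  set B₀ : ℕ := 2 ^ (⌈1/δ⌉₊) with hB₀
  refine ⟨K ^ B₀, one_le_pow₀ hK1, ?_⟩
  intro n hn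
  have hn0 : n ≠ 0 := by omega
  -- key per-prime inequality
  have hkey : ∀ p ∈ n.primeFactors,
      ((n.factorization p + 1 : ℕ):ℝ) ≤ (if p < B₀ then K else 1) * ((p:ℝ)^(n.factorization p))^δ := by
    intro p hp
    have hpp : p.Prime := Nat.prime_of_mem_primeFactors hp
    have hp2 : (2:ℝ) ≤ (p:ℝ) := by exact_mod_cast hpp.two_le
    set a : ℕ := n.factorization p with ha
    have hpa : ((p:ℝ)^a)^δ = ((p:ℝ)^δ)^a := by
      rw [← Real.rpow_natCast (p:ℝ) a, ← Real.rpow_mul (by positivity), mul_comm,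
        Real.rpow_mul (by positivity), Real.rpow_natCast]
    have hpδ : (2:ℝ)^δ ≤ (p:ℝ)^δ := Real.rpow_le_rpow (by norm_num) hp2 hδ.le
    by_cases hcase : p < B₀
    · simp only [hcase, if_true]
      rw [hpa]
      have h1 : ((2:ℝ)^δ)^a ≤ ((p:ℝ)^δ)^a := by
        apply pow_le_pow_left₀ (by positivity) hpδ
      have h2 : (1:ℝ) + (a:ℝ) * t ≤ ((2:ℝ)^δ)^a := by
        have := one_add_mul_le_pow (a := t) (by linarith) a
        have he : (1 + t) = (2:ℝ)^δ := by rw [ht]; ring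
        rw [he] at this
        linarith [this]
      have h3 : μ * ((a:ℕ):ℝ) + μ ≤ 1 + (a:ℝ) * t := by
        have hμ1 : μ ≤ 1 := min_le_left _ _
        have hμt : μ ≤ t := min_le_right _ _
        have han : (0:ℝ) ≤ (a:ℝ) := by positivity
        nlinarith
      push_cast
      rw [div_mul_eq_mul_div, le_div_iff₀ hμ0]
      nlinarith
    · simp only [hcase, if_false, one_mul]
      push_neg at hcase
      have hBδ : (2:ℝ) ≤ ((B₀:ℕ):ℝ)^δ := by
        rw [hB₀]
        push_cast
        rw [← Real.rpow_natCast (2:ℝ) (⌈1/δ⌉₊), ← Real.rpow_mul (by norm_num)]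
        have h1 : (1:ℝ) ≤ (⌈1/δ⌉₊ : ℝ) * δ := by
          have h2 : (1/δ) * δ ≤ (⌈1/δ⌉₊ : ℝ) * δ :=
            mul_le_mul_of_nonneg_right (Nat.le_ceil _) hδ.le
          rw [one_div, inv_mul_cancel₀ (ne_of_gt hδ)] at h2
          rw [one_div]
          linarith
        calc (2:ℝ) = (2:ℝ)^(1:ℝ) := by simp
          _ ≤ (2:ℝ)^((⌈1/δ⌉₊ : ℝ) * δ) := by
              apply Real.rpow_le_rpow_of_exponent_le (by norm_num) h1
      have hpB : ((B₀:ℕ):ℝ) ≤ (p:ℝ) := by exact_mod_cast hcase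
      have hpδ2 : (2:ℝ) ≤ (p:ℝ)^δ := by
        calc (2:ℝ) ≤ ((B₀:ℕ):ℝ)^δ := hBδ
          _ ≤ (p:ℝ)^δ := Real.rpow_le_rpow (by positivity) hpB hδ.le
      rw [hpa]
      have h1 : ((2:ℝ))^a ≤ ((p:ℝ)^δ)^a := pow_le_pow_left₀ (by norm_num) hpδ2 a
      have h2 : ((a:ℕ):ℝ) + 1 ≤ (2:ℝ)^a := by
        have := Nat.lt_two_pow_self (n := a)
        have : (a + 1 : ℕ) ≤ 2^a := by omega
        exact_mod_cast this
      push_cast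
      push_cast at h2
      linarith
  -- assemble
  have hτ : (n.divisors.card : ℝ) = ∏ p ∈ n.primeFactors, ((n.factorization p + 1 : ℕ):ℝ) := by
    rw [Nat.card_divisors hn0]
    push_cast
    rfl
  have hnδ : ((n:ℝ))^δ = ∏ p ∈ n.primeFactors, ((p:ℝ)^(n.factorization p))^δ := by
    have h1 : (n:ℝ) = ∏ p ∈ n.primeFactors, (p:ℝ)^(n.factorization p) := by
      conv_lhs => rw [← Nat.factorization_prod_pow_eq_self hn0]
      rw [Nat.prod_factorization_eq_prod_primeFactors]
      push_cast
      rfl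
    rw [h1, ← Real.finset_prod_rpow _ _ (fun i _ => by positivity)]
  calc (n.divisors.card : ℝ)
      = ∏ p ∈ n.primeFactors, ((n.factorization p + 1 : ℕ):ℝ) := hτ
    _ ≤ ∏ p ∈ n.primeFactors, ((if p < B₀ then K else 1) * ((p:ℝ)^(n.factorization p))^δ) := by
        apply Finset.prod_le_prod (fun i _ => by positivity) hkey
    _ = (∏ p ∈ n.primeFactors, (if p < B₀ then K else 1)) * ((n:ℝ))^δ := by
        rw [Finset.prod_mul_distrib, hnδ]
    _ ≤ K ^ B₀ * ((n:ℝ))^δ := by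
        apply mul_le_mul_of_nonneg_right _ (by positivity)
        rw [Finset.prod_ite, Finset.prod_const, Finset.prod_const, one_pow, mul_one]
        apply pow_le_pow_right₀ hK1
        calc (n.primeFactors.filter (· < B₀)).card
            ≤ (Finset.range B₀).card := by
              apply Finset.card_le_card
              intro x hx
              simp only [Finset.mem_filter] at hx
              simp [Finset.mem_range, hx.2]
          _ = B₀ := Finset.card_range B₀


lemma sqrtCount (n : ℕ) [NeZero n] (x : ZMod n) (hx : IsUnit x) :
    (Finset.univ.filter (fun y : ZMod n => y^2 = x^2)).card ≤ 2 * n.divisors.card := by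
  have hn0 : n ≠ 0 := NeZero.ne n
  set X : ℕ := x.val with hXdef
  have hXcop : Nat.Coprime X n := by
    obtain ⟨u, rfl⟩ := hx
    exact ZMod.val_coe_unit_coprime u
  set S := Finset.univ.filter (fun y : ZMod n => y^2 = x^2) with hS
  -- basic divisibility for members
  have hdvd : ∀ y ∈ S, (n:ℤ) ∣ ((X:ℤ) - (y.val:ℤ)) * ((X:ℤ) + (y.val:ℤ)) := by
    intro y hy
    simp only [hS, Finset.mem_filter] at hy
    have hy2 := hy.2
    apply (ZMod.intCast_zmod_eq_zero_iff_dvd _ n).mp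
    push_cast
    have h1 : ((X:ℕ) : ZMod n) = x := ZMod.natCast_rightInverse x
    have h2 : ((y.val:ℕ) : ZMod n) = y := ZMod.natCast_rightInverse y
    rw [h1, h2]
    linear_combination - hy2
  set Φ : ZMod n → ℕ := fun y => Int.gcd ((X:ℤ) - (y.val:ℤ)) (n:ℤ) with hΦ
  have hmaps : ∀ y ∈ S, Φ y ∈ n.divisors := by
    intro y _
    rw [Nat.mem_divisors]
    constructor
    · have : ((Φ y : ℕ):ℤ) ∣ (n:ℤ) := Int.gcd_dvd_right _ _
      exact_mod_cast this
    · exact hn0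
  rw [hS] at *
  rw [Finset.card_eq_sum_card_fiberwise hmaps]
  have hfib : ∀ e ∈ n.divisors,
      ((Finset.univ.filter (fun y : ZMod n => y^2 = x^2)).filter (fun y => Φ y = e)).card ≤ 2 := by
    intro e he
    set Fib := (Finset.univ.filter (fun y : ZMod n => y^2 = x^2)).filter (fun y => Φ y = e) with hFib
    rcases Fib.eq_empty_or_nonempty with hemp | ⟨y₀, hy₀⟩
    · simp [hemp]
    -- for each y in Fib, m ∣ X + Y where m = n / e
    have hedvd : e ∣ n := (Nat.mem_divisors.mp he).1
    set m : ℕ := n / e with hm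
    have hem : e * m = n := Nat.mul_div_cancel' hedvd
    have he0 : e ≠ 0 := by
      rintro rfl
      simp at hem
      omega
    have hXY : ∀ y ∈ Fib, (m:ℤ) ∣ (X:ℤ) + (y.val:ℤ) := by
      intro y hy
      simp only [hFib, Finset.mem_filter] at hy
      have hyS : y ∈ Finset.univ.filter (fun y : ZMod n => y^2 = x^2) := by
        simp only [Finset.mem_filter]; exact ⟨hy.1.1, hy.1.2⟩
      have hA := hdvd y hyS
      set A : ℤ := (X:ℤ) - (y.val:ℤ) with hAdef
      have hge : Int.gcd A (n:ℤ) = e := hy.2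
      have hgpos : 0 < Int.gcd A (n:ℤ) := by rw [hge]; omega
      have hcop : Int.gcd (A / (e:ℤ)) ((n:ℤ) / (e:ℤ)) = 1 := by
        have := Int.gcd_div_gcd_div_gcd (i := A) (j := (n:ℤ)) hgpos
        rwa [hge] at this
      have hnm : ((n:ℤ)) / ((e:ℤ)) = (m:ℤ) := by
        rw [hm]; exact_mod_cast (Int.natCast_div n e).symm
      rw [hnm] at hcop
      have hAe : (e:ℤ) ∣ A := by
        have : ((Int.gcd A (n:ℤ) : ℕ):ℤ) ∣ A := Int.gcd_dvd_left _ _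
        rwa [hge] at this
      have hAeq : A = (e:ℤ) * (A / (e:ℤ)) := by
        rw [Int.mul_ediv_cancel' hAe]
      have hn' : (n:ℤ) = (e:ℤ) * (m:ℤ) := by exact_mod_cast hem.symm
      rw [hn', hAeq] at hA
      have hA2 : (e:ℤ) * ((m:ℤ)) ∣ (e:ℤ) * ((A / (e:ℤ)) * ((X:ℤ) + (y.val:ℤ))) := by
        rw [← mul_assoc]; exact hA
      have hA3 : (m:ℤ) ∣ (A / (e:ℤ)) * ((X:ℤ) + (y.val:ℤ)) :=
        (mul_dvd_mul_iff_left (by exact_mod_cast he0 : (e:ℤ) ≠ 0)).mp hA2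
      have hiscop : IsCoprime ((m:ℤ)) (A / (e:ℤ)) := by
        rw [Int.isCoprime_iff_gcd_eq_one, Int.gcd_comm]
        exact hcop
      exact hiscop.dvd_of_dvd_mul_left hA3
    have hXmY : ∀ y ∈ Fib, (e:ℤ) ∣ (X:ℤ) - (y.val:ℤ) := by
      intro y hy
      simp only [hFib, Finset.mem_filter] at hy
      have hge : Int.gcd ((X:ℤ) - (y.val:ℤ)) (n:ℤ) = e := hy.2
      have : ((Int.gcd ((X:ℤ) - (y.val:ℤ)) (n:ℤ) : ℕ):ℤ) ∣ (X:ℤ) - (y.val:ℤ) := Int.gcd_dvd_left _ _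
      rwa [hge] at this
    -- t | 2
    set t : ℕ := Nat.gcd e m with htdef
    have htdvd2 : t ∣ 2 := by
      have h1 : (t:ℤ) ∣ (X:ℤ) - (y₀.val:ℤ) := by
        apply dvd_trans _ (hXmY y₀ hy₀)
        exact_mod_cast Int.natCast_dvd_natCast.mpr (Nat.gcd_dvd_left e m)
      have h2 : (t:ℤ) ∣ (X:ℤ) + (y₀.val:ℤ) := by
        apply dvd_trans _ (hXY y₀ hy₀)
        exact_mod_cast Int.natCast_dvd_natCast.mpr (Nat.gcd_dvd_right e m)
      have h3 : (t:ℤ) ∣ 2 * (X:ℤ) := by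
        have := dvd_add h1 h2
        have heq : ((X:ℤ) - (y₀.val:ℤ)) + ((X:ℤ) + (y₀.val:ℤ)) = 2 * (X:ℤ) := by ring
        rwa [heq] at this
      have h4 : t ∣ 2 * X := by exact_mod_cast h3
      have h5 : Nat.Coprime t X := by
        apply Nat.Coprime.coprime_dvd_left (dvd_trans (Nat.gcd_dvd_left e m) hedvd)
        exact (Nat.coprime_comm.mp hXcop)
      exact (Nat.Coprime.dvd_of_dvd_mul_right h5 h4)
    -- pairwise: n ∣ 2 * (Y - Y')
    have hpair : ∀ y ∈ Fib, (n:ℤ) ∣ 2 * ((y.val:ℤ) - (y₀.val:ℤ)) := by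
      intro y hy
      have h1 : (e:ℤ) ∣ (y.val:ℤ) - (y₀.val:ℤ) := by
        have := dvd_sub (hXmY y₀ hy₀) (hXmY y hy)
        have heq : ((X:ℤ) - (y₀.val:ℤ)) - ((X:ℤ) - (y.val:ℤ)) = (y.val:ℤ) - (y₀.val:ℤ) := by ring
        rwa [heq] at this
      have h2 : (m:ℤ) ∣ (y.val:ℤ) - (y₀.val:ℤ) := by
        have := dvd_sub (hXY y hy) (hXY y₀ hy₀)
        have heq : ((X:ℤ) + (y.val:ℤ)) - ((X:ℤ) + (y₀.val:ℤ)) = (y.val:ℤ) - (y₀.val:ℤ) := by ring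
        rwa [heq] at this
      have hlcm : ((Nat.lcm e m : ℕ):ℤ) ∣ (y.val:ℤ) - (y₀.val:ℤ) := by
        have := lcm_dvd h1 h2
        rw [← Int.coe_lcm] at this
        have heq : Int.lcm (e:ℤ) (m:ℤ) = Nat.lcm e m := by
          rw [Int.lcm]
          simp
        rwa [heq] at this
      obtain ⟨D', hD'⟩ := hlcm
      obtain ⟨w, hw⟩ := htdvd2
      have hglcm : t * Nat.lcm e m = e * m := Nat.gcd_mul_lcm e m
      have : 2 * ((y.val:ℤ) - (y₀.val:ℤ)) = (n:ℤ) * (w * D') := by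
        rw [hD']
        have : (2:ℤ) = (t:ℤ) * (w:ℤ) := by exact_mod_cast hw
        rw [this]
        have hn' : (n:ℤ) = (t:ℤ) * (Nat.lcm e m : ℤ) := by
          rw [← hem]
          exact_mod_cast hglcm.symm
        rw [hn']
        ring
      exact Dvd.intro _ this.symm
    -- image under (· - y₀) lies in {0, (n/2 : ℕ)}
    have hcard : Fib.card ≤ ({(0 : ZMod n), ((n/2 : ℕ) : ZMod n)} : Finset (ZMod n)).card := by
      apply Finset.card_le_card_of_injOn (fun y => y - y₀)
      · intro y hy
        have hn2 := hpair y hy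
        set z : ZMod n := y - y₀ with hz
        have h2z : n ∣ 2 * z.val := by
          apply (ZMod.natCast_eq_zero_iff _ n).mp
          push_cast
          have hzy : ((z.val:ℕ) : ZMod n) = z := ZMod.natCast_rightInverse z
          rw [hzy, hz]
          have hyv : ((y.val:ℕ) : ZMod n) = y := ZMod.natCast_rightInverse y
          have hy0v : ((y₀.val:ℕ) : ZMod n) = y₀ := ZMod.natCast_rightInverse y₀
          have : (((2 * ((y.val:ℤ) - (y₀.val:ℤ)) : ℤ)) : ZMod n) = 0 := by
            rw [ZMod.intCast_zmod_eq_zero_iff_dvd]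
            exact hn2
          push_cast at this
          rw [hyv, hy0v] at this
          linear_combination this
        obtain ⟨k, hk⟩ := h2z
        have hzlt : z.val < n := ZMod.val_lt z
        have hk2 : k = 0 ∨ k = 1 := by
          rcases Nat.lt_or_ge k 2 with h | h
          · omega
          · exfalso; nlinarith
        simp only [Finset.mem_coe, Finset.mem_insert, Finset.mem_singleton]
        rcases hk2 with rfl | rfl
        · left
          have : z.val = 0 := by omega
          rwa [← ZMod.val_eq_zero]
        · right
          have hzv : z.val = n / 2 := by omega
          rw [← hz, ← ZMod.natCast_rightInverse z, hzv]
      · intro y _ y' _ h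
        simpa using sub_left_injective h
    have : ({(0 : ZMod n), ((n/2 : ℕ) : ZMod n)} : Finset (ZMod n)).card ≤ 2 := by
      apply le_trans (Finset.card_insert_le _ _)
      simp
    omega
  calc ∑ e ∈ n.divisors, ((Finset.univ.filter (fun y : ZMod n => y^2 = x^2)).filter (fun y => Φ y = e)).card
      ≤ ∑ e ∈ n.divisors, 2 := Finset.sum_le_sum hfib
    _ = 2 * n.divisors.card := by rw [Finset.sum_const, smul_eq_mul, mul_comm]



lemma isUnit_intCast_zmod (n : ℕ) (x : ℤ) (h : Int.gcd x (n:ℤ) = 1) :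
    IsUnit ((x : ℤ) : ZMod n) := by
  have hco : Nat.Coprime x.natAbs n := by
    rwa [Int.gcd, Int.natAbs_natCast] at h
  have hu : IsUnit ((x.natAbs : ℕ) : ZMod n) := (ZMod.isUnit_iff_coprime _ n).mpr hco
  rcases Int.natAbs_eq x with h1 | h1
  · rw [h1, Int.cast_natCast]; exact hu
  · rw [h1, Int.cast_neg, Int.cast_natCast]; exact hu.neg

lemma thetaFiber (d' n₁ m₁ n₂ m₂ : ℕ) [NeZero d'] (h₁ : m₁ ≤ 2*n₁+1)
    (T : Finset (ℕ×ℕ)) (hT : T ⊆ (Finset.Ioc n₁ m₁ ×ˢ Finset.Ioc n₂ m₂))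
    (hcopT : ∀ P ∈ T, Nat.Coprime P.1 P.2 ∧ IsUnit ((P.1:ℕ) : ZMod d') ∧ IsUnit ((P.2:ℕ) : ZMod d'))
    (hθ : ∀ P ∈ T, ∀ P' ∈ T,
      (P.2 : ZMod d') * (P.1 : ZMod d')⁻¹ = (P'.2 : ZMod d') * (P'.1 : ZMod d')⁻¹) :
    T.card ≤ 2 * ((m₁*m₂) / d') + 1 := by
  classical
  have hd'0 : 0 < d' := Nat.pos_of_ne_zero (NeZero.ne d')
  rcases T.eq_empty_or_nonempty with hemp | ⟨⟨A, B⟩, hAB⟩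
  · simp [hemp]
  have hABbox := hT hAB
  rw [Finset.mem_product] at hABbox
  obtain ⟨hA, hB⟩ := hABbox
  simp only [Finset.mem_Ioc] at hA hB
  obtain ⟨hABcop, hAu, hBu⟩ := hcopT ⟨A,B⟩ hAB
  set W : ℕ := m₁ * m₂ with hW
  calc T.card ≤ ((Finset.Icc (-(W:ℤ)) W).filter (fun u => (d':ℤ) ∣ u)).card := by
        apply Finset.card_le_card_of_injOn (fun P => (P.1:ℤ) * (B:ℤ) - (P.2:ℤ) * (A:ℤ))
        · -- maps to
          intro P hP
          have hPbox := hT hP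
          rw [Finset.mem_product] at hPbox
          obtain ⟨hP1, hP2⟩ := hPbox
          simp only [Finset.mem_Ioc] at hP1 hP2
          obtain ⟨hPcop, hxu, hyu⟩ := hcopT P hP
          simp only [Finset.mem_coe, Finset.mem_filter, Finset.mem_Icc]
          refine ⟨⟨?_, ?_⟩, ?_⟩
          · have e1 : (P.2:ℤ) * (A:ℤ) ≤ (W:ℤ) := by
              have := Nat.mul_le_mul hP2.2 hA.2
              rw [hW]
              rw [mul_comm m₁ m₂]
              exact_mod_cast this
            have e2 : (0:ℤ) ≤ (P.1:ℤ) * (B:ℤ) := by positivity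
            linarith
          · have e1 : (P.1:ℤ) * (B:ℤ) ≤ (W:ℤ) := by
              have := Nat.mul_le_mul hP1.2 hB.2
              exact_mod_cast this
            have e2 : (0:ℤ) ≤ (P.2:ℤ) * (A:ℤ) := by positivity
            linarith
          · -- divisibility via θ equality
            have hABeq := hθ P hP ⟨A,B⟩ hAB
            have hxx : (P.1 : ZMod d') * (P.1 : ZMod d')⁻¹ = 1 := ZMod.mul_inv_of_unit _ hxu
            have hAA : (A : ZMod d') * (A : ZMod d')⁻¹ = 1 := ZMod.mul_inv_of_unit _ hAu
            have key : (P.1 : ZMod d') * (B : ZMod d') = (P.2 : ZMod d') * (A : ZMod d') := by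
              linear_combination (-((P.1 : ZMod d')*(A : ZMod d'))) * hABeq
                + ((P.2 : ZMod d')*(A : ZMod d')) * hxx - ((P.1 : ZMod d')*(B : ZMod d')) * hAA
            apply (ZMod.intCast_zmod_eq_zero_iff_dvd _ d').mp
            push_cast
            linear_combination key
        · -- injective
          intro P hP P' hP' heq
          simp only at heq
          have hPbox := hT hP
          have hP'box := hT hP'
          rw [Finset.mem_product] at hPbox hP'box
          simp only [Finset.mem_Ioc] at hPbox hP'box
          have hd1 : (B:ℤ) * ((P.1:ℤ) - (P'.1:ℤ)) = (A:ℤ) * ((P.2:ℤ) - (P'.2:ℤ)) := by linarith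
          have hcopAB : IsCoprime ((A:ℤ)) ((B:ℤ)) := Nat.isCoprime_iff_coprime.mpr hABcop
          have hdvd : (A:ℤ) ∣ (B:ℤ) * ((P.1:ℤ) - (P'.1:ℤ)) := Dvd.intro _ hd1.symm
          have hdvd2 : (A:ℤ) ∣ ((P.1:ℤ) - (P'.1:ℤ)) := hcopAB.dvd_of_dvd_mul_left hdvd
          have hx0 : (P.1:ℤ) - (P'.1:ℤ) = 0 := by
            apply Int.eq_zero_of_abs_lt_dvd hdvd2
            have u1 : (n₁:ℤ) < (P'.1:ℤ) := by exact_mod_cast hP'box.1.1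
            have u2 : (P.1:ℤ) ≤ (m₁:ℤ) := by exact_mod_cast hPbox.1.2
            have u3 : (n₁:ℤ) < (P.1:ℤ) := by exact_mod_cast hPbox.1.1
            have u4 : (P'.1:ℤ) ≤ (m₁:ℤ) := by exact_mod_cast hP'box.1.2
            have hAn : (n₁:ℤ) < (A:ℤ) := by exact_mod_cast hA.1
            have h₁' : (m₁:ℤ) ≤ 2*(n₁:ℤ)+1 := by exact_mod_cast h₁
            rw [abs_lt]
            omega
          have hy0 : (P.2:ℤ) - (P'.2:ℤ) = 0 := by
            rw [hx0, mul_zero] at hd1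
            have hA0 : (A:ℤ) ≠ 0 := by
              have : 0 < A := by omega
              exact_mod_cast this.ne'
            rcases mul_eq_zero.mp hd1.symm with h | h
            · exact absurd h hA0
            · exact h
          have e1 : P.1 = P'.1 := by exact_mod_cast sub_eq_zero.mp hx0
          have e2 : P.2 = P'.2 := by exact_mod_cast sub_eq_zero.mp hy0
          exact Prod.ext e1 e2
    _ ≤ 2 * (W/d') + 1 := mcount W d' hd'0

lemma Ncount (q : ℕ) (hq : 0 < q) (n₁ m₁ n₂ m₂ : ℕ)
    (h₁ : m₁ ≤ 2*n₁ + 1) (h₂ : m₂ ≤ 2*n₂ + 1)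
    (d : ℕ) (hdq : d ∣ q) (hd0 : 0 < d) (r s : ℤ) (hr : r ≠ 0) (hs : s ≠ 0) :
    (((Finset.Ioc n₁ m₁) ×ˢ (Finset.Ioc n₂ m₂)).filter
      (fun P => (Nat.Coprime P.1 P.2 ∧ Nat.Coprime (P.1*P.2) q) ∧
        (d:ℤ) ∣ ((P.1:ℤ)^2 * s + (P.2:ℤ)^2 * r))).card
    ≤ if ((Int.gcd s (d:ℤ) : ℤ) ∣ r)
      then 2 * (d / Int.gcd s (d:ℤ)).divisors.card * (2 * ((m₁*m₂) / (d / Int.gcd s (d:ℤ))) + 1)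
      else 0 := by
  classical
  set g : ℕ := Int.gcd s (d:ℤ) with hgdef
  set S := ((Finset.Ioc n₁ m₁) ×ˢ (Finset.Ioc n₂ m₂)).filter
      (fun P => (Nat.Coprime P.1 P.2 ∧ Nat.Coprime (P.1*P.2) q) ∧
        (d:ℤ) ∣ ((P.1:ℤ)^2 * s + (P.2:ℤ)^2 * r)) with hSdef
  rcases S.eq_empty_or_nonempty with hemp | ⟨⟨a, b⟩, habS⟩
  · rw [hemp, Finset.card_empty]; exact Nat.zero_le _
  have hab := habS
  rw [hSdef, Finset.mem_filter, Finset.mem_product] at hab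
  obtain ⟨⟨ha, hb⟩, ⟨hcop, hcabq⟩, hdvd₀⟩ := hab
  simp only [Finset.mem_Ioc] at ha hb
  have hcaq : Nat.Coprime a q := Nat.Coprime.coprime_dvd_left (dvd_mul_right a b) hcabq
  have hcbq : Nat.Coprime b q := Nat.Coprime.coprime_dvd_left (dvd_mul_left b a) hcabq
  have hgd : (g:ℤ) ∣ (d:ℤ) := Int.gcd_dvd_right _ _
  have hgdn : g ∣ d := by exact_mod_cast hgd
  have hgs : (g:ℤ) ∣ s := Int.gcd_dvd_left _ _
  have hg0 : 0 < g := by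
    rcases Nat.eq_zero_or_pos g with h | h
    · exfalso
      rw [hgdef] at h
      have := Int.gcd_eq_zero_iff.mp h
      exact hs this.1
    · exact h
  have hgr : (g:ℤ) ∣ r := by
    have h1 : (g:ℤ) ∣ (a:ℤ)^2 * s + (b:ℤ)^2 * r := dvd_trans hgd hdvd₀
    have h2 : (g:ℤ) ∣ (a:ℤ)^2 * s := Dvd.dvd.mul_left hgs _
    have h3 : (g:ℤ) ∣ (b:ℤ)^2 * r := (dvd_add_right h2).mp h1
    have hcbg : Nat.Coprime g b := (Nat.Coprime.coprime_dvd_right (dvd_trans hgdn hdq) hcbq).symm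
    have hcbg2 : IsCoprime ((g:ℤ)) ((b:ℤ)^2) := by
      have := Nat.isCoprime_iff_coprime.mpr (Nat.Coprime.pow_right 2 hcbg)
      push_cast at this
      exact this
    exact hcbg2.dvd_of_dvd_mul_left h3
  rw [if_pos hgr]
  set d' : ℕ := d / g with hd'def
  have hd'0 : 0 < d' := Nat.div_pos (Nat.le_of_dvd hd0 hgdn) hg0
  haveI : NeZero d' := ⟨hd'0.ne'⟩
  have hd'q : d' ∣ q := dvd_trans (Nat.div_dvd_of_dvd hgdn) hdq
  have hdd' : (d:ℤ) = (g:ℤ) * (d':ℤ) := by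
    rw [hd'def]
    exact_mod_cast (Nat.mul_div_cancel' hgdn).symm
  set s₁ : ℤ := s / (g:ℤ) with hs₁def
  set r₁ : ℤ := r / (g:ℤ) with hr₁def
  have hs₁ : s = (g:ℤ) * s₁ := (Int.mul_ediv_cancel' hgs).symm
  have hr₁ : r = (g:ℤ) * r₁ := (Int.mul_ediv_cancel' hgr).symm
  have hg0' : (g:ℤ) ≠ 0 := by exact_mod_cast hg0.ne'
  have hcong : ∀ P ∈ S, (d':ℤ) ∣ ((P.1:ℤ)^2 * s₁ + (P.2:ℤ)^2 * r₁) := by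
    intro P hP
    rw [hSdef, Finset.mem_filter] at hP
    have h1 := hP.2.2
    rw [hs₁, hr₁, hdd'] at h1
    have h2 : (g:ℤ) * (d':ℤ) ∣ (g:ℤ) * ((P.1:ℤ)^2 * s₁ + (P.2:ℤ)^2 * r₁) := by
      have heq : (P.1:ℤ)^2 * ((g:ℤ) * s₁) + (P.2:ℤ)^2 * ((g:ℤ) * r₁)
          = (g:ℤ) * ((P.1:ℤ)^2 * s₁ + (P.2:ℤ)^2 * r₁) := by ring
      rwa [heq] at h1
    exact (mul_dvd_mul_iff_left hg0').mp h2
  have hs₁d' : Int.gcd s₁ (d':ℤ) = 1 := by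
    have h1 := Int.gcd_div_gcd_div_gcd (i := s) (j := (d:ℤ))
      (by rw [← hgdef]; exact_mod_cast hg0)
    rw [← hgdef] at h1
    have h2 : (d:ℤ) / (g:ℤ) = (d':ℤ) := by
      rw [hd'def]; exact_mod_cast (Int.natCast_div d g).symm
    rw [h2] at h1
    exact h1
  have hunit : ∀ P ∈ S, IsUnit ((P.1:ℕ) : ZMod d') ∧ IsUnit ((P.2:ℕ) : ZMod d') := by
    intro P hP
    rw [hSdef, Finset.mem_filter] at hP
    have hc1 : Nat.Coprime P.1 q := Nat.Coprime.coprime_dvd_left (dvd_mul_right _ _) hP.2.1.2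
    have hc2 : Nat.Coprime P.2 q := Nat.Coprime.coprime_dvd_left (dvd_mul_left _ _) hP.2.1.2
    exact ⟨(ZMod.isUnit_iff_coprime _ d').mpr (Nat.Coprime.coprime_dvd_right hd'q hc1),
           (ZMod.isUnit_iff_coprime _ d').mpr (Nat.Coprime.coprime_dvd_right hd'q hc2)⟩
  have hr₁d' : Int.gcd r₁ (d':ℤ) = 1 := by
    set k : ℕ := Int.gcd r₁ (d':ℤ) with hkdef
    have hkr : (k:ℤ) ∣ r₁ := Int.gcd_dvd_left _ _
    have hkd' : (k:ℤ) ∣ (d':ℤ) := Int.gcd_dvd_right _ _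
    have h1 : (k:ℤ) ∣ (a:ℤ)^2 * s₁ + (b:ℤ)^2 * r₁ := dvd_trans hkd' (hcong ⟨a,b⟩ habS)
    have h2 : (k:ℤ) ∣ (b:ℤ)^2 * r₁ := Dvd.dvd.mul_left hkr _
    have h3 : (k:ℤ) ∣ (a:ℤ)^2 * s₁ := (dvd_add_left h2).mp h1
    have hkq : k ∣ q := by
      have hkd'n : k ∣ d' := by exact_mod_cast hkd'
      exact dvd_trans hkd'n hd'q
    have hcak : IsCoprime ((k:ℤ)) ((a:ℤ)^2) := by
      have hnc : Nat.Coprime k (a^2) :=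
        Nat.Coprime.pow_right 2 ((Nat.Coprime.coprime_dvd_right hkq hcaq).symm)
      have := Nat.isCoprime_iff_coprime.mpr hnc
      push_cast at this
      exact this
    have h4 : (k:ℤ) ∣ s₁ := hcak.dvd_of_dvd_mul_left h3
    have h5 : (k:ℤ) ∣ (Int.gcd s₁ (d':ℤ) : ℤ) := Int.natCast_dvd_natCast.mpr (Int.dvd_gcd h4 hkd')
    rw [hs₁d'] at h5
    have : k ∣ 1 := by exact_mod_cast h5
    have := Nat.dvd_one.mp this
    omega
  -- θ map and square roots
  set θmap : ℕ×ℕ → ZMod d' := fun P => (P.2 : ZMod d') * (P.1 : ZMod d')⁻¹ with hθdef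
  have hau : IsUnit ((a:ℕ) : ZMod d') := (hunit ⟨a,b⟩ habS).1
  have hbu : IsUnit ((b:ℕ) : ZMod d') := (hunit ⟨a,b⟩ habS).2
  have hainvu : IsUnit ((a : ZMod d')⁻¹) :=
    IsUnit.of_mul_eq_one _ (ZMod.inv_mul_of_unit _ hau)
  set x₀ : ZMod d' := (b : ZMod d') * (a : ZMod d')⁻¹ with hx₀def
  have hx₀u : IsUnit x₀ := hbu.mul hainvu
  have hru : IsUnit ((r₁ : ℤ) : ZMod d') := isUnit_intCast_zmod d' r₁ hr₁d'
  -- image of θmap is inside square roots of x₀^2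
  have himg : S.image θmap ⊆ Finset.univ.filter (fun y : ZMod d' => y^2 = x₀^2) := by
    intro θ hθ
    obtain ⟨P, hP, rfl⟩ := Finset.mem_image.mp hθ
    simp only [Finset.mem_filter, Finset.mem_univ, true_and]
    -- congruences in ZMod d'
    have e1 : ((P.1:ℕ) : ZMod d')^2 * ((s₁:ℤ) : ZMod d') + ((P.2:ℕ) : ZMod d')^2 * ((r₁:ℤ) : ZMod d') = 0 := by
      have := (ZMod.intCast_zmod_eq_zero_iff_dvd _ d').mpr (hcong P hP)
      push_cast at this
      linear_combination this
    have e2 : ((a:ℕ) : ZMod d')^2 * ((s₁:ℤ) : ZMod d') + ((b:ℕ) : ZMod d')^2 * ((r₁:ℤ) : ZMod d') = 0 := by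
      have := (ZMod.intCast_zmod_eq_zero_iff_dvd _ d').mpr (hcong ⟨a,b⟩ habS)
      push_cast at this
      linear_combination this
    set x : ZMod d' := (P.1 : ZMod d') with hxdef
    set y : ZMod d' := (P.2 : ZMod d') with hydef
    set α : ZMod d' := (a : ZMod d') with hαdef
    set β : ZMod d' := (b : ZMod d') with hβdef
    have hkey0 : y^2*α^2*((r₁:ℤ) : ZMod d') = x^2*β^2*((r₁:ℤ) : ZMod d') := by
      linear_combination α^2 * e1 - x^2 * e2
    have hkey : y^2*α^2 = x^2*β^2 := hru.mul_right_cancel hkey0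
    have hxu : IsUnit x := (hunit P hP).1
    have hxx : x * x⁻¹ = 1 := ZMod.mul_inv_of_unit _ hxu
    have hαα : α * α⁻¹ = 1 := ZMod.mul_inv_of_unit _ hau
    have c1 : (y*x⁻¹)^2 * (x^2*α^2) = y^2*α^2 := by
      linear_combination (y^2*α^2*(x*x⁻¹ + 1)) * hxx
    have c2 : (β*α⁻¹)^2 * (x^2*α^2) = x^2*β^2 := by
      linear_combination (x^2*β^2*(α*α⁻¹ + 1)) * hαα
    have hunit2 : IsUnit (x^2*α^2) := (hxu.pow 2).mul (hau.pow 2)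
    have : (y*x⁻¹)^2 * (x^2*α^2) = (β*α⁻¹)^2 * (x^2*α^2) := by
      rw [c1, c2, hkey]
    exact hunit2.mul_right_cancel this
  -- count
  rw [Finset.card_eq_sum_card_image θmap S]
  have hfib : ∀ θ0 ∈ S.image θmap,
      (S.filter (fun P => θmap P = θ0)).card ≤ 2 * ((m₁*m₂) / d') + 1 := by
    intro θ0 _
    apply thetaFiber d' n₁ m₁ n₂ m₂ h₁
    · intro P hP
      rw [Finset.mem_filter] at hP
      have hPS := hP.1
      rw [hSdef, Finset.mem_filter] at hPS
      exact hPS.1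
    · intro P hP
      rw [Finset.mem_filter] at hP
      have hPS := hP.1
      rw [hSdef, Finset.mem_filter] at hPS
      exact ⟨hPS.2.1.1, (hunit P hP.1).1, (hunit P hP.1).2⟩
    · intro P hP P' hP'
      rw [Finset.mem_filter] at hP hP'
      exact hP.2.trans hP'.2.symm
  calc ∑ θ0 ∈ S.image θmap, (S.filter (fun P => θmap P = θ0)).card
      ≤ ∑ θ0 ∈ S.image θmap, (2 * ((m₁*m₂) / d') + 1) := Finset.sum_le_sum hfib
    _ = (S.image θmap).card * (2 * ((m₁*m₂) / d') + 1) := by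
        rw [Finset.sum_const, smul_eq_mul]
    _ ≤ (2 * d'.divisors.card) * (2 * ((m₁*m₂) / d') + 1) := by
        apply Nat.mul_le_mul_right
        calc (S.image θmap).card
            ≤ (Finset.univ.filter (fun y : ZMod d' => y^2 = x₀^2)).card :=
              Finset.card_le_card himg
          _ ≤ 2 * d'.divisors.card := sqrtCount d' x₀ hx₀u





/-- combined summand -/
noncomputable def TT (q d f₁ f₂ : ℕ) (r s : ℤ) : ℝ :=
  if ((Nat.Coprime f₁ f₂ ∧ Nat.Coprime (f₁*f₂) q) ∧
      (r ≠ 0 ∧ s ≠ 0 ∧ 2*|r| ≤ (q:ℤ) ∧ 2*|s| ≤ (q:ℤ) ∧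
        (d:ℤ) ∣ ((f₁:ℤ)^2*s + (f₂:ℤ)^2*r)))
  then (d:ℝ) * (|(r:ℝ)| * |(s:ℝ)|)⁻¹ else 0

noncomputable def TTh (q d f₁ f₂ : ℕ) (r s : ℤ) : ℝ :=
  if (((Nat.Coprime f₁ f₂ ∧ Nat.Coprime (f₁*f₂) q) ∧
      (r ≠ 0 ∧ s ≠ 0 ∧ 2*|r| ≤ (q:ℤ) ∧ 2*|s| ≤ (q:ℤ) ∧
        (d:ℤ) ∣ ((f₁:ℤ)^2*s + (f₂:ℤ)^2*r))) ∧ |s| ≤ (d:ℤ))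
  then (d:ℝ) * (|(r:ℝ)| * |(s:ℝ)|)⁻¹ else 0

noncomputable def TTl (q d f₁ f₂ : ℕ) (r s : ℤ) : ℝ :=
  if (((Nat.Coprime f₁ f₂ ∧ Nat.Coprime (f₁*f₂) q) ∧
      (r ≠ 0 ∧ s ≠ 0 ∧ 2*|r| ≤ (q:ℤ) ∧ 2*|s| ≤ (q:ℤ) ∧
        (d:ℤ) ∣ ((f₁:ℤ)^2*s + (f₂:ℤ)^2*r))) ∧ (d:ℤ) < |s|)
  then (d:ℝ) * (|(r:ℝ)| * |(s:ℝ)|)⁻¹ else 0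

lemma TT_nonneg (q d f₁ f₂ : ℕ) (r s : ℤ) : 0 ≤ TT q d f₁ f₂ r s := by
  unfold TT; split <;> positivity

lemma TT_split (q d f₁ f₂ : ℕ) (r s : ℤ) :
    TT q d f₁ f₂ r s = TTh q d f₁ f₂ r s + TTl q d f₁ f₂ r s := by
  unfold TT TTh TTl
  by_cases hC : ((Nat.Coprime f₁ f₂ ∧ Nat.Coprime (f₁*f₂) q) ∧
      (r ≠ 0 ∧ s ≠ 0 ∧ 2*|r| ≤ (q:ℤ) ∧ 2*|s| ≤ (q:ℤ) ∧
        (d:ℤ) ∣ ((f₁:ℤ)^2*s + (f₂:ℤ)^2*r)))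
  · rcases le_or_gt |s| (d:ℤ) with h | h
    · rw [if_pos hC, if_pos ⟨hC, h⟩,
        if_neg (by rintro ⟨_, h2⟩; exact absurd h2 (not_lt.mpr h)), add_zero]
    · rw [if_pos hC, if_neg (by rintro ⟨_, h2⟩; exact absurd h2 (not_le.mpr h)),
        if_pos ⟨hC, h⟩, zero_add]
  · rw [if_neg hC, if_neg (by rintro ⟨h1, _⟩; exact hC h1),
      if_neg (by rintro ⟨h1, _⟩; exact hC h1), add_zero]

lemma expand (q n₁ m₁ n₂ m₂ : ℕ) :
    ∑ f₁ ∈ Finset.Ioc n₁ m₁, ∑ f₂ ∈ Finset.Ioc n₂ m₂,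
      (if Nat.Coprime f₁ f₂ ∧ Nat.Coprime (f₁ * f₂) q then
        Mweight q ((f₁ : ℤ) ^ 2) ((f₂ : ℤ) ^ 2) else 0)
    = ∑ d ∈ q.divisors, ∑ f₁ ∈ Finset.Ioc n₁ m₁, ∑ f₂ ∈ Finset.Ioc n₂ m₂,
        ∑ r ∈ Finset.Icc (-(q:ℤ)) (q:ℤ), ∑ s ∈ Finset.Icc (-(q:ℤ)) (q:ℤ),
          TT q d f₁ f₂ r s := by
  have hpt : ∀ f₁ f₂ : ℕ,
      (if Nat.Coprime f₁ f₂ ∧ Nat.Coprime (f₁ * f₂) q then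
        Mweight q ((f₁ : ℤ) ^ 2) ((f₂ : ℤ) ^ 2) else 0)
      = ∑ d ∈ q.divisors, ∑ r ∈ Finset.Icc (-(q:ℤ)) (q:ℤ), ∑ s ∈ Finset.Icc (-(q:ℤ)) (q:ℤ),
          TT q d f₁ f₂ r s := by
    intro f₁ f₂
    by_cases h : Nat.Coprime f₁ f₂ ∧ Nat.Coprime (f₁ * f₂) q
    · rw [if_pos h]
      unfold Mweight
      apply Finset.sum_congr rfl; intro d _
      rw [Finset.mul_sum]
      apply Finset.sum_congr rfl; intro r _
      rw [Finset.mul_sum]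
      apply Finset.sum_congr rfl; intro s _
      rw [mul_ite, mul_zero]
      unfold TT
      rw [if_congr (Iff.symm (and_iff_right h)) rfl rfl]
    · rw [if_neg h]
      symm
      apply Finset.sum_eq_zero; intro d _
      apply Finset.sum_eq_zero; intro r _
      apply Finset.sum_eq_zero; intro s _
      unfold TT
      rw [if_neg (by rintro ⟨h1, _⟩; exact h h1)]
  calc ∑ f₁ ∈ Finset.Ioc n₁ m₁, ∑ f₂ ∈ Finset.Ioc n₂ m₂,
      (if Nat.Coprime f₁ f₂ ∧ Nat.Coprime (f₁ * f₂) q then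
        Mweight q ((f₁ : ℤ) ^ 2) ((f₂ : ℤ) ^ 2) else 0)
      = ∑ f₁ ∈ Finset.Ioc n₁ m₁, ∑ f₂ ∈ Finset.Ioc n₂ m₂, ∑ d ∈ q.divisors,
          ∑ r ∈ Finset.Icc (-(q:ℤ)) (q:ℤ), ∑ s ∈ Finset.Icc (-(q:ℤ)) (q:ℤ),
          TT q d f₁ f₂ r s := by
        apply Finset.sum_congr rfl; intro f₁ _
        apply Finset.sum_congr rfl; intro f₂ _
        exact hpt f₁ f₂
    _ = ∑ f₁ ∈ Finset.Ioc n₁ m₁, ∑ d ∈ q.divisors, ∑ f₂ ∈ Finset.Ioc n₂ m₂,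
          ∑ r ∈ Finset.Icc (-(q:ℤ)) (q:ℤ), ∑ s ∈ Finset.Icc (-(q:ℤ)) (q:ℤ),
          TT q d f₁ f₂ r s := by
        apply Finset.sum_congr rfl; intro f₁ _
        exact Finset.sum_comm
    _ = ∑ d ∈ q.divisors, ∑ f₁ ∈ Finset.Ioc n₁ m₁, ∑ f₂ ∈ Finset.Ioc n₂ m₂,
          ∑ r ∈ Finset.Icc (-(q:ℤ)) (q:ℤ), ∑ s ∈ Finset.Icc (-(q:ℤ)) (q:ℤ),
          TT q d f₁ f₂ r s := Finset.sum_comm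

lemma ite_nonneg' (c : Prop) [Decidable c] (x : ℝ) (hx : 0 ≤ x) :
    0 ≤ if c then x else 0 := by split <;> simp [hx]

lemma classSum (q d : ℕ) (hd0 : 0 < d) (c : ℤ → Prop) [DecidablePred c]
    (hc0 : ∀ s, c s → s ≠ 0)
    (hpair : ∀ s s', c s → c s' → (d:ℤ) ∣ s - s')
    (hlow : ∀ s, c s → (d:ℤ) ≤ |s|) :
    ∑ s ∈ Finset.Icc (-(q:ℤ)) (q:ℤ), (if c s then |(s:ℝ)|⁻¹ else 0)
      ≤ 2 * Hsum q / d := by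
  rw [← Finset.sum_filter]
  apply twoSideSum q d hd0
  · exact Finset.filter_subset _ _
  · intro s hs; exact hc0 s (Finset.mem_filter.mp hs).2
  · intro s hs s' hs'
    exact hpair s s' (Finset.mem_filter.mp hs).2 (Finset.mem_filter.mp hs').2
  · intro s hs; exact hlow s (Finset.mem_filter.mp hs).2

lemma rSum (q : ℕ) :
    ∑ r ∈ Finset.Icc (-(q:ℤ)) (q:ℤ), (if r ≠ 0 then |(r:ℝ)|⁻¹ else 0)
      ≤ 2 * Hsum q := by
  have := classSum q 1 one_pos (fun r => r ≠ 0)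
    (fun s h => h) (fun s s' _ _ => one_dvd _)
    (fun s h => by
      have : 0 < |s| := abs_pos.mpr h
      omega)
  simpa using this

lemma taild (q n₁ m₁ n₂ m₂ d : ℕ) (hq : 0 < q) (hdq : d ∣ q) (hd0 : 0 < d) :
    ∑ f₁ ∈ Finset.Ioc n₁ m₁, ∑ f₂ ∈ Finset.Ioc n₂ m₂,
      ∑ r ∈ Finset.Icc (-(q:ℤ)) (q:ℤ), ∑ s ∈ Finset.Icc (-(q:ℤ)) (q:ℤ),
        TTl q d f₁ f₂ r s
    ≤ (m₁:ℝ) * (m₂:ℝ) * (4 * Hsum q * Hsum q) := by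
  have hHq := Hsum_nonneg q
  have key : ∀ f₁ f₂ : ℕ,
      ∑ r ∈ Finset.Icc (-(q:ℤ)) (q:ℤ), ∑ s ∈ Finset.Icc (-(q:ℤ)) (q:ℤ),
        TTl q d f₁ f₂ r s ≤ 4 * Hsum q * Hsum q := by
    intro f₁ f₂
    by_cases hcop : Nat.Coprime f₁ f₂ ∧ Nat.Coprime (f₁*f₂) q
    · -- coprimality of f₁ with d
      have hc1 : Nat.Coprime f₁ q := Nat.Coprime.coprime_dvd_left (dvd_mul_right _ _) hcop.2
      have hcd : IsCoprime ((d:ℤ)) ((f₁:ℤ)^2) := by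
        have hn : Nat.Coprime d (f₁^2) :=
          Nat.Coprime.pow_right 2 ((Nat.Coprime.coprime_dvd_right hdq hc1).symm)
        have := Nat.isCoprime_iff_coprime.mpr hn
        push_cast at this
        exact this
      -- inner s-sum bound, valid for each r
      have hsSum : ∀ r : ℤ,
          ∑ s ∈ Finset.Icc (-(q:ℤ)) (q:ℤ),
            (if (s ≠ 0 ∧ (d:ℤ) < |s| ∧ (d:ℤ) ∣ ((f₁:ℤ)^2*s + (f₂:ℤ)^2*r)) then |(s:ℝ)|⁻¹ else 0)
          ≤ 2 * Hsum q / d := by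
        intro r
        apply classSum q d hd0
        · intro s h; exact h.1
        · intro s s' h h'
          have h1 : (d:ℤ) ∣ (f₁:ℤ)^2 * (s - s') := by
            have := dvd_sub h.2.2 h'.2.2
            have heq : ((f₁:ℤ)^2*s + (f₂:ℤ)^2*r) - ((f₁:ℤ)^2*s' + (f₂:ℤ)^2*r)
                = (f₁:ℤ)^2 * (s - s') := by ring
            rwa [heq] at this
          exact hcd.dvd_of_dvd_mul_left h1
        · intro s h; exact le_of_lt h.2.1
      -- pointwise bound
      have hpt : ∀ r s : ℤ, TTl q d f₁ f₂ r s ≤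
          ((d:ℝ) * (if r ≠ 0 then |(r:ℝ)|⁻¹ else 0)) *
          (if (s ≠ 0 ∧ (d:ℤ) < |s| ∧ (d:ℤ) ∣ ((f₁:ℤ)^2*s + (f₂:ℤ)^2*r)) then |(s:ℝ)|⁻¹ else 0) := by
        intro r s
        unfold TTl
        by_cases hC : (((Nat.Coprime f₁ f₂ ∧ Nat.Coprime (f₁*f₂) q) ∧
            (r ≠ 0 ∧ s ≠ 0 ∧ 2*|r| ≤ (q:ℤ) ∧ 2*|s| ≤ (q:ℤ) ∧
              (d:ℤ) ∣ ((f₁:ℤ)^2*s + (f₂:ℤ)^2*r))) ∧ (d:ℤ) < |s|)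
        · rw [if_pos hC, if_pos hC.1.2.1, if_pos ⟨hC.1.2.2.1, hC.2, hC.1.2.2.2.2.2⟩]
          rw [mul_inv]
          apply le_of_eq
          ring
        · rw [if_neg hC]
          apply mul_nonneg
          · apply mul_nonneg (by positivity)
            exact ite_nonneg' _ _ (by positivity)
          · exact ite_nonneg' _ _ (by positivity)
      calc ∑ r ∈ Finset.Icc (-(q:ℤ)) (q:ℤ), ∑ s ∈ Finset.Icc (-(q:ℤ)) (q:ℤ),
            TTl q d f₁ f₂ r s
          ≤ ∑ r ∈ Finset.Icc (-(q:ℤ)) (q:ℤ),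
              ((d:ℝ) * (if r ≠ 0 then |(r:ℝ)|⁻¹ else 0)) * (2 * Hsum q / d) := by
            apply Finset.sum_le_sum; intro r _
            calc ∑ s ∈ Finset.Icc (-(q:ℤ)) (q:ℤ), TTl q d f₁ f₂ r s
                ≤ ∑ s ∈ Finset.Icc (-(q:ℤ)) (q:ℤ),
                  ((d:ℝ) * (if r ≠ 0 then |(r:ℝ)|⁻¹ else 0)) *
                  (if (s ≠ 0 ∧ (d:ℤ) < |s| ∧ (d:ℤ) ∣ ((f₁:ℤ)^2*s + (f₂:ℤ)^2*r)) then |(s:ℝ)|⁻¹ else 0) := by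
                  apply Finset.sum_le_sum; intro s _; exact hpt r s
              _ = ((d:ℝ) * (if r ≠ 0 then |(r:ℝ)|⁻¹ else 0)) *
                  ∑ s ∈ Finset.Icc (-(q:ℤ)) (q:ℤ),
                  (if (s ≠ 0 ∧ (d:ℤ) < |s| ∧ (d:ℤ) ∣ ((f₁:ℤ)^2*s + (f₂:ℤ)^2*r)) then |(s:ℝ)|⁻¹ else 0) := by
                  rw [Finset.mul_sum]
              _ ≤ ((d:ℝ) * (if r ≠ 0 then |(r:ℝ)|⁻¹ else 0)) * (2 * Hsum q / d) := by
                  apply mul_le_mul_of_nonneg_left (hsSum r)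
                  apply mul_nonneg (by positivity)
                  exact ite_nonneg' _ _ (by positivity)
        _ = ((d:ℝ) * ∑ r ∈ Finset.Icc (-(q:ℤ)) (q:ℤ), (if r ≠ 0 then |(r:ℝ)|⁻¹ else 0))
              * (2 * Hsum q / d) := by
            rw [← Finset.sum_mul, Finset.mul_sum]
        _ ≤ ((d:ℝ) * (2 * Hsum q)) * (2 * Hsum q / d) := by
            apply mul_le_mul_of_nonneg_right _ (by positivity)
            apply mul_le_mul_of_nonneg_left (rSum q) (by positivity)
        _ = 4 * Hsum q * Hsum q := by
            have hd' : (d:ℝ) ≠ 0 := by positivity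
            field_simp
            ring
    · -- not coprime: everything is zero
      apply le_trans (le_of_eq _) (by positivity : (0:ℝ) ≤ 4 * Hsum q * Hsum q)
      apply Finset.sum_eq_zero; intro r _
      apply Finset.sum_eq_zero; intro s _
      unfold TTl
      rw [if_neg (by rintro ⟨⟨h1, _⟩, _⟩; exact hcop h1)]
  calc ∑ f₁ ∈ Finset.Ioc n₁ m₁, ∑ f₂ ∈ Finset.Ioc n₂ m₂,
        ∑ r ∈ Finset.Icc (-(q:ℤ)) (q:ℤ), ∑ s ∈ Finset.Icc (-(q:ℤ)) (q:ℤ),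
        TTl q d f₁ f₂ r s
      ≤ ∑ f₁ ∈ Finset.Ioc n₁ m₁, ∑ f₂ ∈ Finset.Ioc n₂ m₂, (4 * Hsum q * Hsum q) := by
        apply Finset.sum_le_sum; intro f₁ _
        apply Finset.sum_le_sum; intro f₂ _
        exact key f₁ f₂
    _ = ((Finset.Ioc n₁ m₁).card : ℝ) * (((Finset.Ioc n₂ m₂).card : ℝ) * (4 * Hsum q * Hsum q)) := by
        rw [Finset.sum_const, Finset.sum_const, nsmul_eq_mul, nsmul_eq_mul]
    _ ≤ (m₁:ℝ) * (m₂:ℝ) * (4 * Hsum q * Hsum q) := by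
        have e1 : ((Finset.Ioc n₁ m₁).card : ℝ) ≤ (m₁:ℝ) := by
          rw [Nat.card_Ioc]
          exact_mod_cast Nat.sub_le m₁ n₁
        have e2 : ((Finset.Ioc n₂ m₂).card : ℝ) ≤ (m₂:ℝ) := by
          rw [Nat.card_Ioc]
          exact_mod_cast Nat.sub_le m₂ n₂
        have h1 : (0:ℝ) ≤ 4 * Hsum q * Hsum q := by positivity
        have c1 : (0:ℝ) ≤ ((Finset.Ioc n₂ m₂).card : ℝ) := by positivity
        have c2 : (0:ℝ) ≤ ((Finset.Ioc n₁ m₁).card : ℝ) := by positivity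
        calc ((Finset.Ioc n₁ m₁).card : ℝ) * (((Finset.Ioc n₂ m₂).card : ℝ) * (4 * Hsum q * Hsum q))
            ≤ (m₁:ℝ) * (((Finset.Ioc n₂ m₂).card : ℝ) * (4 * Hsum q * Hsum q)) := by
              apply mul_le_mul_of_nonneg_right e1 (by positivity)
          _ ≤ (m₁:ℝ) * ((m₂:ℝ) * (4 * Hsum q * Hsum q)) := by
              apply mul_le_mul_of_nonneg_left _ (by positivity)
              exact mul_le_mul_of_nonneg_right e2 h1
          _ = (m₁:ℝ) * (m₂:ℝ) * (4 * Hsum q * Hsum q) := by ring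

lemma multSum (q g : ℕ) (hg : 0 < g) :
    ∑ x ∈ Finset.Icc (-(q:ℤ)) (q:ℤ), (if (x ≠ 0 ∧ (g:ℤ) ∣ x) then |(x:ℝ)|⁻¹ else 0)
      ≤ 2 * Hsum q / g := by
  apply classSum q g hg
  · intro s h; exact h.1
  · intro s s' h h'; exact dvd_sub h.2 h'.2
  · intro s h
    exact Int.le_of_dvd (abs_pos.mpr h.1) ((dvd_abs _ _).mpr h.2)

lemma headd (q n₁ m₁ n₂ m₂ d : ℕ) (hq : 0 < q) (hdq : d ∣ q) (hd0 : 0 < d)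
    (h₁ : m₁ ≤ 2*n₁+1) (h₂ : m₂ ≤ 2*n₂+1) :
    ∑ f₁ ∈ Finset.Ioc n₁ m₁, ∑ f₂ ∈ Finset.Ioc n₂ m₂,
      ∑ r ∈ Finset.Icc (-(q:ℤ)) (q:ℤ), ∑ s ∈ Finset.Icc (-(q:ℤ)) (q:ℤ),
        TTh q d f₁ f₂ r s
    ≤ ∑ g0 ∈ d.divisors,
        (2*(q.divisors.card:ℝ)) * ((d:ℝ) * (2*(((m₁*m₂)/(d/g0) : ℕ):ℝ)+1))
          * ((2*Hsum q/(g0:ℝ)) * (2*Hsum q/(g0:ℝ))) := by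
  classical
  set R := Finset.Icc (-(q:ℤ)) (q:ℤ) with hR
  set W : ℕ := m₁ * m₂ with hW
  set I₁ := Finset.Ioc n₁ m₁
  set I₂ := Finset.Ioc n₂ m₂
  -- Step A : reorder
  have stepA : ∑ f₁ ∈ I₁, ∑ f₂ ∈ I₂, ∑ r ∈ R, ∑ s ∈ R, TTh q d f₁ f₂ r s
      = ∑ r ∈ R, ∑ s ∈ R, ∑ f₁ ∈ I₁, ∑ f₂ ∈ I₂, TTh q d f₁ f₂ r s := by
    calc ∑ f₁ ∈ I₁, ∑ f₂ ∈ I₂, ∑ r ∈ R, ∑ s ∈ R, TTh q d f₁ f₂ r s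
        = ∑ f₁ ∈ I₁, ∑ r ∈ R, ∑ f₂ ∈ I₂, ∑ s ∈ R, TTh q d f₁ f₂ r s := by
          apply Finset.sum_congr rfl; intro f₁ _; exact Finset.sum_comm
      _ = ∑ r ∈ R, ∑ f₁ ∈ I₁, ∑ f₂ ∈ I₂, ∑ s ∈ R, TTh q d f₁ f₂ r s := Finset.sum_comm
      _ = ∑ r ∈ R, ∑ f₁ ∈ I₁, ∑ s ∈ R, ∑ f₂ ∈ I₂, TTh q d f₁ f₂ r s := by
          apply Finset.sum_congr rfl; intro r _
          apply Finset.sum_congr rfl; intro f₁ _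
          exact Finset.sum_comm
      _ = ∑ r ∈ R, ∑ s ∈ R, ∑ f₁ ∈ I₁, ∑ f₂ ∈ I₂, TTh q d f₁ f₂ r s := by
          apply Finset.sum_congr rfl; intro r _
          exact Finset.sum_comm
  rw [stepA]
  -- inner pair count
  set N : ℤ → ℤ → ℕ := fun r s => ((I₁ ×ˢ I₂).filter
      (fun P => (Nat.Coprime P.1 P.2 ∧ Nat.Coprime (P.1*P.2) q) ∧
        (d:ℤ) ∣ ((P.1:ℤ)^2 * s + (P.2:ℤ)^2 * r))).card with hN
  have stepB : ∀ r s : ℤ, ∑ f₁ ∈ I₁, ∑ f₂ ∈ I₂, TTh q d f₁ f₂ r s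
      = if (r ≠ 0 ∧ s ≠ 0 ∧ 2*|r| ≤ (q:ℤ) ∧ 2*|s| ≤ (q:ℤ) ∧ |s| ≤ (d:ℤ))
        then ((d:ℝ) * (|(r:ℝ)| * |(s:ℝ)|)⁻¹) * (N r s : ℝ) else 0 := by
    intro r s
    by_cases hrs : (r ≠ 0 ∧ s ≠ 0 ∧ 2*|r| ≤ (q:ℤ) ∧ 2*|s| ≤ (q:ℤ) ∧ |s| ≤ (d:ℤ))
    · rw [if_pos hrs]
      have hpt : ∀ f₁ f₂ : ℕ, TTh q d f₁ f₂ r s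
          = if ((Nat.Coprime f₁ f₂ ∧ Nat.Coprime (f₁*f₂) q) ∧
              (d:ℤ) ∣ ((f₁:ℤ)^2 * s + (f₂:ℤ)^2 * r))
            then ((d:ℝ) * (|(r:ℝ)| * |(s:ℝ)|)⁻¹) else 0 := by
        intro f₁ f₂
        unfold TTh
        apply if_congr _ rfl rfl
        constructor
        · rintro ⟨⟨hc, hx⟩, _⟩; exact ⟨hc, hx.2.2.2.2⟩
        · rintro ⟨hc, hx⟩
          exact ⟨⟨hc, hrs.1, hrs.2.1, hrs.2.2.1, hrs.2.2.2.1, hx⟩, hrs.2.2.2.2⟩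
      calc ∑ f₁ ∈ I₁, ∑ f₂ ∈ I₂, TTh q d f₁ f₂ r s
          = ∑ P ∈ I₁ ×ˢ I₂, (if ((Nat.Coprime P.1 P.2 ∧ Nat.Coprime (P.1*P.2) q) ∧
              (d:ℤ) ∣ ((P.1:ℤ)^2 * s + (P.2:ℤ)^2 * r))
            then ((d:ℝ) * (|(r:ℝ)| * |(s:ℝ)|)⁻¹) else 0) := by
            rw [Finset.sum_product]
            apply Finset.sum_congr rfl; intro f₁ _
            apply Finset.sum_congr rfl; intro f₂ _
            exact hpt f₁ f₂
        _ = ∑ P ∈ (I₁ ×ˢ I₂).filter (fun P => (Nat.Coprime P.1 P.2 ∧ Nat.Coprime (P.1*P.2) q) ∧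
              (d:ℤ) ∣ ((P.1:ℤ)^2 * s + (P.2:ℤ)^2 * r)), ((d:ℝ) * (|(r:ℝ)| * |(s:ℝ)|)⁻¹) :=
            (Finset.sum_filter _ _).symm
        _ = ((d:ℝ) * (|(r:ℝ)| * |(s:ℝ)|)⁻¹) * (N r s : ℝ) := by
            rw [Finset.sum_const, nsmul_eq_mul, hN, mul_comm]
    · rw [if_neg hrs]
      apply Finset.sum_eq_zero; intro f₁ _
      apply Finset.sum_eq_zero; intro f₂ _
      unfold TTh
      rw [if_neg]
      rintro ⟨⟨_, hx⟩, hy⟩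
      exact hrs ⟨hx.1, hx.2.1, hx.2.2.1, hx.2.2.2.1, hy⟩
  -- Step C: apply Ncount and pass to J
  set τq : ℝ := (q.divisors.card : ℝ) with hτq
  set J : ℤ → ℤ → ℝ := fun r s =>
    if ((r ≠ 0 ∧ s ≠ 0 ∧ 2*|r| ≤ (q:ℤ) ∧ 2*|s| ≤ (q:ℤ) ∧ |s| ≤ (d:ℤ)) ∧
        ((Int.gcd s (d:ℤ) : ℤ) ∣ r))
    then ((d:ℝ) * (|(r:ℝ)| * |(s:ℝ)|)⁻¹) *
      (2 * τq * (2*(((W/(d/Int.gcd s (d:ℤ))) : ℕ):ℝ)+1)) else 0 with hJ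
  have stepC : ∀ r s : ℤ,
      (if (r ≠ 0 ∧ s ≠ 0 ∧ 2*|r| ≤ (q:ℤ) ∧ 2*|s| ≤ (q:ℤ) ∧ |s| ≤ (d:ℤ))
        then ((d:ℝ) * (|(r:ℝ)| * |(s:ℝ)|)⁻¹) * (N r s : ℝ) else 0)
      ≤ J r s := by
    intro r s
    simp only [hJ]
    by_cases hrs : (r ≠ 0 ∧ s ≠ 0 ∧ 2*|r| ≤ (q:ℤ) ∧ 2*|s| ≤ (q:ℤ) ∧ |s| ≤ (d:ℤ))
    · rw [if_pos hrs]
      have hNle := Ncount q hq n₁ m₁ n₂ m₂ h₁ h₂ d hdq hd0 r s hrs.1 hrs.2.1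
      by_cases hgr : ((Int.gcd s (d:ℤ) : ℤ) ∣ r)
      · rw [if_pos ⟨hrs, hgr⟩]
        rw [if_pos hgr] at hNle
        apply mul_le_mul_of_nonneg_left _ (by positivity)
        set g : ℕ := Int.gcd s (d:ℤ) with hg
        have hτ : (d/g).divisors.card ≤ q.divisors.card := by
          apply Finset.card_le_card
          apply Nat.divisors_subset_of_dvd hq.ne'
          have hgd : g ∣ d := by
            have : (g:ℤ) ∣ (d:ℤ) := Int.gcd_dvd_right _ _
            exact_mod_cast this
          exact dvd_trans (Nat.div_dvd_of_dvd hgd) hdq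
        have h3 : (2 * (d/g).divisors.card * (2*((W/(d/g)):ℕ)+1) : ℕ)
            ≤ (2 * q.divisors.card * (2*((W/(d/g)):ℕ)+1) : ℕ) := by
          apply Nat.mul_le_mul_right
          exact Nat.mul_le_mul_left 2 hτ
        calc (N r s : ℝ) ≤ ((2 * (d/g).divisors.card * (2*((W/(d/g)):ℕ)+1) : ℕ) : ℝ) := by
              exact_mod_cast hNle
          _ ≤ ((2 * q.divisors.card * (2*((W/(d/g)):ℕ)+1) : ℕ) : ℝ) := by exact_mod_cast h3
          _ = 2 * τq * (2*(((W/(d/g) : ℕ)):ℝ)+1) := by rw [hτq]; push_cast; ring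
      · rw [if_neg (by rintro ⟨_, h2⟩; exact hgr h2)]
        rw [if_neg hgr] at hNle
        have : N r s = 0 := Nat.le_zero.mp hNle
        rw [this]
        simp
    · rw [if_neg hrs, if_neg (by rintro ⟨h1, _⟩; exact hrs h1)]
  -- assemble: sum over r,s of J, then fiberwise in gcd
  calc ∑ r ∈ R, ∑ s ∈ R, ∑ f₁ ∈ I₁, ∑ f₂ ∈ I₂, TTh q d f₁ f₂ r s
      ≤ ∑ r ∈ R, ∑ s ∈ R, J r s := by
        apply Finset.sum_le_sum; intro r _
        apply Finset.sum_le_sum; intro s _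
        rw [stepB r s]
        exact stepC r s
    _ = ∑ s ∈ R, ∑ r ∈ R, J r s := Finset.sum_comm
    _ = ∑ g0 ∈ d.divisors, ∑ s ∈ R.filter (fun s => Int.gcd s (d:ℤ) = g0), ∑ r ∈ R, J r s := by
        symm
        apply Finset.sum_fiberwise_of_maps_to
        intro s _
        rw [Nat.mem_divisors]
        refine ⟨?_, hd0.ne'⟩
        have : ((Int.gcd s (d:ℤ) : ℕ):ℤ) ∣ (d:ℤ) := Int.gcd_dvd_right _ _
        exact_mod_cast this
    _ ≤ ∑ g0 ∈ d.divisors,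
        (2*τq) * ((d:ℝ) * (2*(((W/(d/g0) : ℕ)):ℝ)+1))
          * ((2*Hsum q/(g0:ℝ)) * (2*Hsum q/(g0:ℝ))) := by
        apply Finset.sum_le_sum
        intro g0 hg0
        have hg0d : g0 ∣ d := (Nat.mem_divisors.mp hg0).1
        have hg00 : 0 < g0 := Nat.pos_of_mem_divisors hg0
        set C0 : ℝ := (2*τq) * ((d:ℝ) * (2*(((W/(d/g0) : ℕ)):ℝ)+1)) with hC0
        have hC0nn : 0 ≤ C0 := by rw [hC0, hτq]; positivity
        set itg : ℤ → ℝ := fun x => if (x ≠ 0 ∧ (g0:ℤ) ∣ x) then |(x:ℝ)|⁻¹ else 0 with hitg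
        have hitgnn : ∀ x : ℤ, 0 ≤ itg x := by
          intro x; simp only [hitg]; exact ite_nonneg' _ _ (by positivity)
        have hptJ : ∀ s ∈ R.filter (fun s => Int.gcd s (d:ℤ) = g0), ∀ r ∈ R,
            J r s ≤ C0 * (itg s * itg r) := by
          intro s hs r _
          have hsg : Int.gcd s (d:ℤ) = g0 := (Finset.mem_filter.mp hs).2
          simp only [hJ]
          by_cases hcond : ((r ≠ 0 ∧ s ≠ 0 ∧ 2*|r| ≤ (q:ℤ) ∧ 2*|s| ≤ (q:ℤ) ∧ |s| ≤ (d:ℤ)) ∧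
              ((Int.gcd s (d:ℤ) : ℤ) ∣ r))
          · rw [if_pos hcond]
            have hg0s : (g0:ℤ) ∣ s := by
              rw [← hsg]; exact Int.gcd_dvd_left _ _
            have hg0r : (g0:ℤ) ∣ r := by
              rw [← hsg]; exact hcond.2
            have hits1 : itg s = |(s:ℝ)|⁻¹ := by
              simp only [hitg]; rw [if_pos ⟨hcond.1.2.1, hg0s⟩]
            have hitr1 : itg r = |(r:ℝ)|⁻¹ := by
              simp only [hitg]; rw [if_pos ⟨hcond.1.1, hg0r⟩]
            rw [hits1, hitr1, hC0, hsg]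
            rw [mul_inv]
            apply le_of_eq
            ring
          · rw [if_neg hcond]
            apply mul_nonneg hC0nn
            exact mul_nonneg (hitgnn s) (hitgnn r)
        calc ∑ s ∈ R.filter (fun s => Int.gcd s (d:ℤ) = g0), ∑ r ∈ R, J r s
            ≤ ∑ s ∈ R.filter (fun s => Int.gcd s (d:ℤ) = g0), ∑ r ∈ R, C0 * (itg s * itg r) := by
              apply Finset.sum_le_sum; intro s hs
              apply Finset.sum_le_sum; intro r hr
              exact hptJ s hs r hr
          _ = C0 * ((∑ s ∈ R.filter (fun s => Int.gcd s (d:ℤ) = g0), itg s) * (∑ r ∈ R, itg r)) := by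
              simp only [← Finset.mul_sum]
              congr 1
              rw [Finset.sum_mul]
          _ ≤ C0 * ((2*Hsum q/(g0:ℝ)) * (2*Hsum q/(g0:ℝ))) := by
              apply mul_le_mul_of_nonneg_left _ hC0nn
              have hs1 : ∑ s ∈ R.filter (fun s => Int.gcd s (d:ℤ) = g0), itg s
                  ≤ 2*Hsum q/(g0:ℝ) := by
                apply le_trans _ (multSum q g0 hg00)
                apply Finset.sum_le_sum_of_subset_of_nonneg (Finset.filter_subset _ _)
                intro i _ _
                exact hitgnn i
              have hr1 : ∑ r ∈ R, itg r ≤ 2*Hsum q/(g0:ℝ) := multSum q g0 hg00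
              have hsnn : 0 ≤ ∑ s ∈ R.filter (fun s => Int.gcd s (d:ℤ) = g0), itg s :=
                Finset.sum_nonneg (fun i _ => hitgnn i)
              have hrnn : 0 ≤ ∑ r ∈ R, itg r :=
                Finset.sum_nonneg (fun i _ => hitgnn i)
              have hb : (0:ℝ) ≤ 2*Hsum q/(g0:ℝ) := by
                have := Hsum_nonneg q; positivity
              exact mul_le_mul hs1 hr1 hrnn hb
          _ = (2*τq) * ((d:ℝ) * (2*(((W/(d/g0) : ℕ)):ℝ)+1))
                * ((2*Hsum q/(g0:ℝ)) * (2*Hsum q/(g0:ℝ))) := by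
              rw [hC0]

lemma divisorsRecip (d : ℕ) : ∑ g0 ∈ d.divisors, ((g0:ℝ))⁻¹ ≤ Hsum d := by
  unfold Hsum
  apply Finset.sum_le_sum_of_subset_of_nonneg
  · intro g hg
    rw [Finset.mem_Icc]
    have h1 := Nat.pos_of_mem_divisors hg
    have h2 := Nat.divisor_le hg
    omega
  · intro i _ _; positivity

lemma sumDiv (q : ℕ) (hq : 0 < q) : ∑ d ∈ q.divisors, (d:ℝ) ≤ (q:ℝ) * Hsum q := by
  have h1 : ∑ d ∈ q.divisors, (d:ℝ) = ∑ d ∈ q.divisors, ((q/d : ℕ):ℝ) :=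
    (Nat.sum_div_divisors q (fun d => (d:ℝ))).symm
  rw [h1]
  calc ∑ d ∈ q.divisors, ((q/d : ℕ):ℝ)
      ≤ ∑ d ∈ q.divisors, (q:ℝ) * ((d:ℝ))⁻¹ := by
        apply Finset.sum_le_sum
        intro d hd
        have hd0 : 0 < d := Nat.pos_of_mem_divisors hd
        have := Nat.cast_div_le (α := ℝ) (m := q) (n := d)
        rw [div_eq_mul_inv] at this
        exact this
    _ = (q:ℝ) * ∑ d ∈ q.divisors, ((d:ℝ))⁻¹ := by rw [Finset.mul_sum]
    _ ≤ (q:ℝ) * Hsum q := by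
        apply mul_le_mul_of_nonneg_left (divisorsRecip q) (by positivity)

lemma headSum (q d W : ℕ) (hq : 0 < q) (hdq : d ∣ q) (hd0 : 0 < d) :
    ∑ g0 ∈ d.divisors,
        (2*((q.divisors.card:ℝ))) * ((d:ℝ) * (2*(((W/(d/g0) : ℕ)):ℝ)+1))
          * ((2*Hsum q/(g0:ℝ)) * (2*Hsum q/(g0:ℝ)))
    ≤ 8*((q.divisors.card:ℝ))*Hsum q*Hsum q*(2*(W:ℝ)+(d:ℝ))*Hsum q := by
  have hH := Hsum_nonneg q
  set τq : ℝ := (q.divisors.card:ℝ) with hτq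
  have hτnn : 0 ≤ τq := by rw [hτq]; positivity
  calc ∑ g0 ∈ d.divisors,
        (2*τq) * ((d:ℝ) * (2*(((W/(d/g0) : ℕ)):ℝ)+1))
          * ((2*Hsum q/(g0:ℝ)) * (2*Hsum q/(g0:ℝ)))
      ≤ ∑ g0 ∈ d.divisors, 8*τq*Hsum q*Hsum q*(2*(W:ℝ)+(d:ℝ)) * ((g0:ℝ))⁻¹ := by
        apply Finset.sum_le_sum
        intro g0 hg0
        have hg0d : g0 ∣ d := (Nat.mem_divisors.mp hg0).1
        have hg00 : 0 < g0 := Nat.pos_of_mem_divisors hg0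
        have hg0r : (1:ℝ) ≤ (g0:ℝ) := by exact_mod_cast hg00
        have hdr : (0:ℝ) < (d:ℝ) := by exact_mod_cast hd0
        -- cast of division
        have hcd : ((d/g0 : ℕ):ℝ) = (d:ℝ)/(g0:ℝ) := by
          rw [Nat.cast_div hg0d (by positivity)]
        have hkey1 : (((W/(d/g0) : ℕ)):ℝ) ≤ (W:ℝ)*(g0:ℝ)/(d:ℝ) := by
          calc (((W/(d/g0) : ℕ)):ℝ) ≤ (W:ℝ) / ((d/g0 : ℕ):ℝ) := Nat.cast_div_le
            _ = (W:ℝ)*(g0:ℝ)/(d:ℝ) := by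
                rw [hcd, div_div_eq_mul_div]
        have hkey2 : (d:ℝ) * (2*(((W/(d/g0) : ℕ)):ℝ)+1) ≤ (2*(W:ℝ)+(d:ℝ))*(g0:ℝ) := by
          have h3 : (d:ℝ) * (2*(((W/(d/g0) : ℕ)):ℝ)+1) ≤ (d:ℝ) * (2*((W:ℝ)*(g0:ℝ)/(d:ℝ))+1) := by
            apply mul_le_mul_of_nonneg_left _ (by positivity)
            linarith
          have h4 : (d:ℝ) * (2*((W:ℝ)*(g0:ℝ)/(d:ℝ))+1) = 2*(W:ℝ)*(g0:ℝ) + (d:ℝ) := by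
            field_simp
          have h5 : 2*(W:ℝ)*(g0:ℝ) + (d:ℝ) ≤ (2*(W:ℝ)+(d:ℝ))*(g0:ℝ) := by
            have hW0 : (0:ℝ) ≤ (W:ℝ) := by positivity
            nlinarith
          linarith
        -- assemble pointwise
        have hg0nn : (0:ℝ) < (g0:ℝ) := by positivity
        have e1 : (2*Hsum q/(g0:ℝ)) * (2*Hsum q/(g0:ℝ)) = 4*Hsum q*Hsum q/((g0:ℝ)*(g0:ℝ)) := by
          field_simp
          ring
        calc (2*τq) * ((d:ℝ) * (2*(((W/(d/g0) : ℕ)):ℝ)+1))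
              * ((2*Hsum q/(g0:ℝ)) * (2*Hsum q/(g0:ℝ)))
            ≤ (2*τq) * ((2*(W:ℝ)+(d:ℝ))*(g0:ℝ))
              * ((2*Hsum q/(g0:ℝ)) * (2*Hsum q/(g0:ℝ))) := by
              apply mul_le_mul_of_nonneg_right _ (by positivity)
              apply mul_le_mul_of_nonneg_left hkey2 (by positivity)
          _ = 8*τq*Hsum q*Hsum q*(2*(W:ℝ)+(d:ℝ)) * ((g0:ℝ))⁻¹ := by
              field_simp
              ring
    _ = 8*τq*Hsum q*Hsum q*(2*(W:ℝ)+(d:ℝ)) * ∑ g0 ∈ d.divisors, ((g0:ℝ))⁻¹ := by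
        rw [← Finset.mul_sum]
    _ ≤ 8*τq*Hsum q*Hsum q*(2*(W:ℝ)+(d:ℝ)) * Hsum q := by
        apply mul_le_mul_of_nonneg_left _ (by positivity)
        calc ∑ g0 ∈ d.divisors, ((g0:ℝ))⁻¹ ≤ Hsum d := divisorsRecip d
          _ ≤ Hsum q := Hsum_mono (Nat.le_of_dvd hq hdq)


set_option maxHeartbeats 2000000 in
theorem stmt11 (ε : ℝ) (hε : 0 < ε) :
    ∃ C : ℝ, ∀ (F₁ F₂ : ℝ) (q : ℕ), (1 : ℝ) / 2 ≤ F₁ → (1 : ℝ) / 2 ≤ F₂ → 0 < q →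
      ∑ f₁ ∈ Finset.Ioc ⌊F₁⌋₊ ⌊2 * F₁⌋₊, ∑ f₂ ∈ Finset.Ioc ⌊F₂⌋₊ ⌊2 * F₂⌋₊,
        (if Nat.Coprime f₁ f₂ ∧ Nat.Coprime (f₁ * f₂) q then
          Mweight q ((f₁ : ℤ) ^ 2) ((f₂ : ℤ) ^ 2) else 0) ≤
      C * (q : ℝ) ^ ε * (F₁ * F₂ + q) := by
  have hδ : 0 < ε/6 := by positivity
  obtain ⟨Cτ, hCτ1, hCτ⟩ := tau_le_rpow hδ
  set CH : ℝ := 1 + 1/(ε/6) with hCH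
  have hCH1 : 1 ≤ CH := by
    rw [hCH]
    have : 0 < 1/(ε/6) := by positivity
    linarith
  refine ⟨88 * CH^4 * Cτ^2, ?_⟩
  intro F₁ F₂ q hF₁ hF₂ hq
  have hq1 : 1 ≤ q := hq
  set n₁ := ⌊F₁⌋₊ with hn₁
  set m₁ := ⌊2 * F₁⌋₊ with hm₁
  set n₂ := ⌊F₂⌋₊ with hn₂
  set m₂ := ⌊2 * F₂⌋₊ with hm₂
  have hF₁0 : (0:ℝ) ≤ F₁ := by linarith
  have hF₂0 : (0:ℝ) ≤ F₂ := by linarith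
  have h₁ : m₁ ≤ 2*n₁ + 1 := by
    have hlt : F₁ < (n₁:ℝ) + 1 := Nat.lt_floor_add_one F₁
    have : m₁ < 2*n₁ + 2 := by
      rw [hm₁]
      apply Nat.floor_lt (by positivity) |>.mpr
      push_cast
      linarith
    omega
  have h₂ : m₂ ≤ 2*n₂ + 1 := by
    have hlt : F₂ < (n₂:ℝ) + 1 := Nat.lt_floor_add_one F₂
    have : m₂ < 2*n₂ + 2 := by
      rw [hm₂]
      apply Nat.floor_lt (by positivity) |>.mpr
      push_cast
      linarith
    omega
  have hm₁F : (m₁:ℝ) ≤ 2*F₁ := by rw [hm₁]; exact Nat.floor_le (by positivity)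
  have hm₂F : (m₂:ℝ) ≤ 2*F₂ := by rw [hm₂]; exact Nat.floor_le (by positivity)
  set H : ℝ := Hsum q with hH
  have hH1 : 1 ≤ H := one_le_Hsum hq1
  have hH0 : 0 ≤ H := by linarith
  set T : ℝ := (q.divisors.card : ℝ) with hT
  have hT1 : 1 ≤ T := by
    rw [hT]
    have : 0 < q.divisors.card := Finset.card_pos.mpr ⟨q, Nat.mem_divisors_self q hq.ne'⟩
    exact_mod_cast this
  have hT0 : 0 ≤ T := by linarith
  -- main chain
  rw [expand q n₁ m₁ n₂ m₂]
  have hsplit : ∀ d : ℕ,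
      ∑ f₁ ∈ Finset.Ioc n₁ m₁, ∑ f₂ ∈ Finset.Ioc n₂ m₂,
        ∑ r ∈ Finset.Icc (-(q:ℤ)) (q:ℤ), ∑ s ∈ Finset.Icc (-(q:ℤ)) (q:ℤ), TT q d f₁ f₂ r s
      = (∑ f₁ ∈ Finset.Ioc n₁ m₁, ∑ f₂ ∈ Finset.Ioc n₂ m₂,
          ∑ r ∈ Finset.Icc (-(q:ℤ)) (q:ℤ), ∑ s ∈ Finset.Icc (-(q:ℤ)) (q:ℤ), TTh q d f₁ f₂ r s)
      + (∑ f₁ ∈ Finset.Ioc n₁ m₁, ∑ f₂ ∈ Finset.Ioc n₂ m₂,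
          ∑ r ∈ Finset.Icc (-(q:ℤ)) (q:ℤ), ∑ s ∈ Finset.Icc (-(q:ℤ)) (q:ℤ), TTl q d f₁ f₂ r s) := by
    intro d
    simp only [TT_split, Finset.sum_add_distrib]
  calc ∑ d ∈ q.divisors, ∑ f₁ ∈ Finset.Ioc n₁ m₁, ∑ f₂ ∈ Finset.Ioc n₂ m₂,
        ∑ r ∈ Finset.Icc (-(q:ℤ)) (q:ℤ), ∑ s ∈ Finset.Icc (-(q:ℤ)) (q:ℤ), TT q d f₁ f₂ r s
      = (∑ d ∈ q.divisors, ∑ f₁ ∈ Finset.Ioc n₁ m₁, ∑ f₂ ∈ Finset.Ioc n₂ m₂,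
          ∑ r ∈ Finset.Icc (-(q:ℤ)) (q:ℤ), ∑ s ∈ Finset.Icc (-(q:ℤ)) (q:ℤ), TTh q d f₁ f₂ r s)
        + (∑ d ∈ q.divisors, ∑ f₁ ∈ Finset.Ioc n₁ m₁, ∑ f₂ ∈ Finset.Ioc n₂ m₂,
          ∑ r ∈ Finset.Icc (-(q:ℤ)) (q:ℤ), ∑ s ∈ Finset.Icc (-(q:ℤ)) (q:ℤ), TTl q d f₁ f₂ r s) := by
        rw [← Finset.sum_add_distrib]
        apply Finset.sum_congr rfl
        intro d _
        exact hsplit d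
    _ ≤ (16*(m₁*m₂ : ℕ)*T^2*H^3 + 8*(q:ℝ)*T*H^4) + T * ((m₁:ℝ)*(m₂:ℝ)*(4*H*H)) := by
        apply add_le_add
        · -- head part
          calc ∑ d ∈ q.divisors, ∑ f₁ ∈ Finset.Ioc n₁ m₁, ∑ f₂ ∈ Finset.Ioc n₂ m₂,
                ∑ r ∈ Finset.Icc (-(q:ℤ)) (q:ℤ), ∑ s ∈ Finset.Icc (-(q:ℤ)) (q:ℤ), TTh q d f₁ f₂ r s
              ≤ ∑ d ∈ q.divisors, 8*T*H*H*(2*((m₁*m₂ : ℕ):ℝ)+(d:ℝ))*H := by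
                apply Finset.sum_le_sum
                intro d hd
                have hdq : d ∣ q := (Nat.mem_divisors.mp hd).1
                have hd0 : 0 < d := Nat.pos_of_mem_divisors hd
                calc ∑ f₁ ∈ Finset.Ioc n₁ m₁, ∑ f₂ ∈ Finset.Ioc n₂ m₂,
                      ∑ r ∈ Finset.Icc (-(q:ℤ)) (q:ℤ), ∑ s ∈ Finset.Icc (-(q:ℤ)) (q:ℤ),
                        TTh q d f₁ f₂ r s
                    ≤ ∑ g0 ∈ d.divisors,
                        (2*((q.divisors.card:ℝ))) * ((d:ℝ) * (2*((((m₁*m₂)/(d/g0) : ℕ)):ℝ)+1))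
                          * ((2*Hsum q/(g0:ℝ)) * (2*Hsum q/(g0:ℝ))) :=
                      headd q n₁ m₁ n₂ m₂ d hq hdq hd0 h₁ h₂
                  _ ≤ 8*((q.divisors.card:ℝ))*Hsum q*Hsum q*(2*((m₁*m₂ : ℕ):ℝ)+(d:ℝ))*Hsum q :=
                      headSum q d (m₁*m₂) hq hdq hd0
                  _ = 8*T*H*H*(2*((m₁*m₂ : ℕ):ℝ)+(d:ℝ))*H := by rw [← hT, ← hH]
            _ = ∑ d ∈ q.divisors, ((8*T*H*H*H*(2*((m₁*m₂ : ℕ):ℝ))) + (8*T*H*H*H)*(d:ℝ)) := by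
                apply Finset.sum_congr rfl; intro d _; ring
            _ = (q.divisors.card : ℝ) * (8*T*H*H*H*(2*((m₁*m₂ : ℕ):ℝ)))
                + (8*T*H*H*H) * ∑ d ∈ q.divisors, (d:ℝ) := by
                rw [Finset.sum_add_distrib, Finset.sum_const, nsmul_eq_mul, ← Finset.mul_sum]
            _ ≤ T * (8*T*H*H*H*(2*((m₁*m₂ : ℕ):ℝ))) + (8*T*H*H*H) * ((q:ℝ) * H) := by
                apply add_le_add
                · apply le_of_eq; rw [hT]
                · apply mul_le_mul_of_nonneg_left (sumDiv q hq) (by positivity)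
            _ = 16*(m₁*m₂ : ℕ)*T^2*H^3 + 8*(q:ℝ)*T*H^4 := by ring
        · -- tail part
          calc ∑ d ∈ q.divisors, ∑ f₁ ∈ Finset.Ioc n₁ m₁, ∑ f₂ ∈ Finset.Ioc n₂ m₂,
                ∑ r ∈ Finset.Icc (-(q:ℤ)) (q:ℤ), ∑ s ∈ Finset.Icc (-(q:ℤ)) (q:ℤ), TTl q d f₁ f₂ r s
              ≤ ∑ d ∈ q.divisors, (m₁:ℝ)*(m₂:ℝ)*(4*Hsum q*Hsum q) := by
                apply Finset.sum_le_sum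
                intro d hd
                exact taild q n₁ m₁ n₂ m₂ d hq (Nat.mem_divisors.mp hd).1
                  (Nat.pos_of_mem_divisors hd)
            _ = (q.divisors.card : ℝ) * ((m₁:ℝ)*(m₂:ℝ)*(4*Hsum q*Hsum q)) := by
                rw [Finset.sum_const, nsmul_eq_mul]
            _ = T * ((m₁:ℝ)*(m₂:ℝ)*(4*H*H)) := by rw [← hT, ← hH]
    _ ≤ 88 * (T^2*H^4) * (F₁*F₂ + q) := by
        have hWr : ((m₁*m₂ : ℕ):ℝ) = (m₁:ℝ)*(m₂:ℝ) := by push_cast; ring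
        have hW4 : (m₁:ℝ)*(m₂:ℝ) ≤ 4*(F₁*F₂) := by
          calc (m₁:ℝ)*(m₂:ℝ) ≤ (2*F₁)*(2*F₂) := by
                apply mul_le_mul hm₁F hm₂F (by positivity) (by positivity)
            _ = 4*(F₁*F₂) := by ring
        have hFF : (0:ℝ) ≤ F₁*F₂ := by positivity
        have hqr : (1:ℝ) ≤ (q:ℝ) := by exact_mod_cast hq1
        have e1 : 16*((m₁*m₂ : ℕ):ℝ)*T^2*H^3 ≤ 64*(F₁*F₂)*T^2*H^4 := by
          rw [hWr]
          have c1 : (m₁:ℝ)*(m₂:ℝ)*T^2*H^3 ≤ (4*(F₁*F₂))*T^2*H^3 := by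
            apply mul_le_mul_of_nonneg_right _ (by positivity)
            apply mul_le_mul_of_nonneg_right hW4 (by positivity)
          have c2 : (4*(F₁*F₂))*T^2*H^3 ≤ (4*(F₁*F₂))*T^2*H^4 := by
            apply mul_le_mul_of_nonneg_left _ (by positivity)
            calc H^3 = H^3 * 1 := by ring
              _ ≤ H^3 * H := by apply mul_le_mul_of_nonneg_left hH1 (by positivity)
              _ = H^4 := by ring
          nlinarith [c1, c2]
        have e2 : 8*(q:ℝ)*T*H^4 ≤ 8*(q:ℝ)*T^2*H^4 := by
          have hTT : T ≤ T^2 := by nlinarith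
          have hmul := mul_le_mul_of_nonneg_left hTT
            (by positivity : (0:ℝ) ≤ 8*(q:ℝ)*H^4)
          calc 8*(q:ℝ)*T*H^4 = 8*(q:ℝ)*H^4*T := by ring
            _ ≤ 8*(q:ℝ)*H^4*T^2 := hmul
            _ = 8*(q:ℝ)*T^2*H^4 := by ring
        have e3 : T * ((m₁:ℝ)*(m₂:ℝ)*(4*H*H)) ≤ 16*(F₁*F₂)*T^2*H^4 := by
          have c1 : (m₁:ℝ)*(m₂:ℝ)*(4*H*H) ≤ (4*(F₁*F₂))*(4*H*H) := by
            apply mul_le_mul_of_nonneg_right hW4 (by positivity)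
          have c2 : T * ((4*(F₁*F₂))*(4*H*H)) ≤ T^2 * ((4*(F₁*F₂))*(4*H*H*(H*H))) := by
            have h4 : (4*(F₁*F₂))*(4*H*H) ≤ (4*(F₁*F₂))*(4*H*H*(H*H)) := by
              apply mul_le_mul_of_nonneg_left _ (by positivity)
              have hHH1 : (1:ℝ) ≤ H*H := by nlinarith
              have hmul := mul_le_mul_of_nonneg_left hHH1
                (by positivity : (0:ℝ) ≤ 4*H*H)
              calc 4*H*H = 4*H*H*1 := by ring
                _ ≤ 4*H*H*(H*H) := hmul
            have h5 : T ≤ T^2 := by nlinarith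
            apply mul_le_mul h5 h4 (by positivity) (by positivity)
          calc T * ((m₁:ℝ)*(m₂:ℝ)*(4*H*H)) ≤ T * ((4*(F₁*F₂))*(4*H*H)) := by
                apply mul_le_mul_of_nonneg_left c1 hT0
            _ ≤ T^2 * ((4*(F₁*F₂))*(4*H*H*(H*H))) := c2
            _ = 16*(F₁*F₂)*T^2*H^4 := by ring
        have efin : 64*(F₁*F₂)*T^2*H^4 + 8*(q:ℝ)*T^2*H^4 + 16*(F₁*F₂)*T^2*H^4
            ≤ 88 * (T^2*H^4) * (F₁*F₂ + q) := by
          have hTH : (0:ℝ) ≤ T^2*H^4 := by positivity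
          nlinarith [hTH, hFF, hqr]
        linarith [e1, e2, e3, efin]
    _ ≤ 88 * CH^4 * Cτ^2 * (q:ℝ)^ε * (F₁*F₂ + q) := by
        have hFFq : (0:ℝ) ≤ F₁*F₂ + q := by positivity
        apply mul_le_mul_of_nonneg_right _ hFFq
        have hHle : H ≤ CH * (q:ℝ)^(ε/6) := by
          rw [hH, hCH]
          exact Hsum_le_rpow hδ hq1
        have hTle : T ≤ Cτ * (q:ℝ)^(ε/6) := hCτ q hq1
        have hq0 : (0:ℝ) ≤ (q:ℝ) := by positivity
        have hrp0 : (0:ℝ) ≤ (q:ℝ)^(ε/6) := Real.rpow_nonneg hq0 _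
        have h6 : ((q:ℝ)^(ε/6))^(6:ℕ) = (q:ℝ)^ε := by
          rw [← Real.rpow_natCast ((q:ℝ)^(ε/6)) 6, ← Real.rpow_mul hq0]
          norm_num
        calc 88 * (T^2*H^4) ≤ 88 * ((Cτ * (q:ℝ)^(ε/6))^2 * (CH * (q:ℝ)^(ε/6))^4) := by
              have p1 : T^2 ≤ (Cτ * (q:ℝ)^(ε/6))^2 := pow_le_pow_left₀ hT0 hTle 2
              have p2 : H^4 ≤ (CH * (q:ℝ)^(ε/6))^4 := pow_le_pow_left₀ hH0 hHle 4
              have := mul_le_mul p1 p2 (by positivity) (by positivity)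
              linarith
          _ = 88 * CH^4 * Cτ^2 * ((q:ℝ)^(ε/6))^(6:ℕ) := by ring
          _ = 88 * CH^4 * Cτ^2 * (q:ℝ)^ε := by rw [h6]
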